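/- arXiv:2507.17902 — 8 statements merged into one kernel-verified Lean document; each statement's English description precedes it below -/
import Mathlib

section
/- Let G be a finite group, Z a subgroup of the center of G, φ : G → G/Z the quotient map, and 𝒞 a conjugacy class of G/Z not containing the identity. Let x ∈ G be an element with φ(x) ∈ 𝒞, and let 𝒞ₓ denote the conjugacy class of x in G. If the Killing graph 𝒢(G, 𝒞ₓ) is connected, then the Killing graph 𝒢(G/Z, 𝒞) is connected. Moreover, if the common order o of the elements of 𝒞 is coprime to the order of Z, then x can be chosen of order exactly o (i.e., there exists x ∈ G of order o with φ(x) ∈ 𝒞). -/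
/-- The Killing graph of a conjugation-stable subset `C` of a group `G`:
vertices are the elements of `C`, and distinct `a b : C` are adjacent iff the
centraliser of `a * b` meets `C`, i.e. iff the Killing form `K_C(a,b)` is nonzero. -/
def killingGraph {G : Type*} [Group G] (C : Set G) : SimpleGraph C :=
  SimpleGraph.fromRel fun a b => ∃ c ∈ C, Commute c ((a : G) * (b : G))

/-- The commuting graph on a subset `C` of a group: distinct elements are
adjacent iff they commute. -/
def commGraph {G : Type*} [Group G] (C : Set G) : SimpleGraph C :=
  SimpleGraph.fromRel fun a b => Commute (a : G) (b : G)

/-- The matrix of the Killing form on `C` over `ℚ`: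
`K_C(a,b) = |C_G(ab) ∩ C|`. -/
noncomputable def killingMatrix {G : Type*} [Group G] (C : Set G) [Fintype C] :
    Matrix C C ℚ :=
  Matrix.of fun a b => (Set.ncard {c ∈ C | Commute c ((a : G) * (b : G))} : ℚ)

/-- The set of involutions of a group. -/
def involSet (G : Type*) [Monoid G] : Set G := {x | x ^ 2 = 1 ∧ x ≠ 1}

/-- Mapping reachability along a vertex map that sends edges to reachable pairs. -/
lemma reachable_map_aux {V W : Type*} {Γ : SimpleGraph V} {H : SimpleGraph W} (f : V → W)
    (h : ∀ a b, Γ.Adj a b → H.Reachable (f a) (f b)) {a b : V} (hr : Γ.Reachable a b) :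
    H.Reachable (f a) (f b) := by
  obtain ⟨w⟩ := hr
  induction w with
  | nil => exact SimpleGraph.Reachable.refl _
  | cons h' p ih => exact (h _ _ h').trans ih

/-- If the Killing graph of the conjugacy class `𝒞ₓ` of a lift `x` of an element
of a conjugacy class `𝒞` of `G ⧸ Z` (with `Z` central and `1 ∉ 𝒞`) is connected,
then the Killing graph of `𝒞` is connected; moreover if the common order of the
elements of `𝒞` is coprime to `|Z|`, the lift can be chosen of that exact order. -/
theorem statement0 {G : Type*} [Group G] [Finite G] (Z : Subgroup G) [Z.Normal]
    (hZ : Z ≤ Subgroup.center G)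
    (g₀ : G ⧸ Z) (𝒞 : Set (G ⧸ Z)) (h𝒞 : 𝒞 = {h | IsConj g₀ h})
    (h1 : (1 : G ⧸ Z) ∉ 𝒞)
    (x : G) (hx : (QuotientGroup.mk x : G ⧸ Z) ∈ 𝒞) :
    ((killingGraph {h : G | IsConj x h}).Connected → (killingGraph 𝒞).Connected) ∧
    (Nat.Coprime (orderOf g₀) (Nat.card Z) →
      ∃ x' : G, orderOf x' = orderOf g₀ ∧ (QuotientGroup.mk x' : G ⧸ Z) ∈ 𝒞) := by
  set φ : G →* G ⧸ Z := QuotientGroup.mk' Z with hφ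
  have hxc : IsConj g₀ (φ x) := by rw [h𝒞] at hx; exact hx
  have hmem : ∀ a : G, IsConj x a → φ a ∈ 𝒞 := by
    intro a ha
    rw [h𝒞]
    exact hxc.trans (φ.map_isConj ha)
  constructor
  · intro hconn
    set Cx : Set G := {h : G | IsConj x h} with hCx
    let f : Cx → 𝒞 := fun a => ⟨φ a, hmem a a.2⟩
    have hsurj : Function.Surjective f := by
      rintro ⟨u, hu⟩
      rw [h𝒞] at hu
      obtain ⟨c, hc⟩ := (hxc.symm.trans hu)
      obtain ⟨g, hg⟩ := QuotientGroup.mk'_surjective Z c.val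
      refine ⟨⟨g * x * g⁻¹, isConj_iff.mpr ⟨g, rfl⟩⟩, Subtype.ext ?_⟩
      show φ (g * x * g⁻¹) = u
      rw [map_mul, map_mul, map_inv, hg]
      calc (c : G ⧸ Z) * φ x * (c : G ⧸ Z)⁻¹ = u * (c : G ⧸ Z) * (c : G ⧸ Z)⁻¹ := by
            rw [hc.eq]
        _ = u := mul_inv_cancel_right _ _
    have hedge : ∀ a b : Cx, (killingGraph Cx).Adj a b →
        (killingGraph 𝒞).Reachable (f a) (f b) := by
      intro a b hab
      by_cases heq : f a = f b
      · rw [heq]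
      · refine SimpleGraph.Adj.reachable ?_
        obtain ⟨hne, hcase⟩ := hab
        refine ⟨heq, ?_⟩
        rcases hcase with ⟨c, hc, hcomm⟩ | ⟨c, hc, hcomm⟩
        · exact Or.inl ⟨φ c, hmem c hc, by simpa using hcomm.map φ⟩
        · exact Or.inr ⟨φ c, hmem c hc, by simpa using hcomm.map φ⟩
      
    haveI : Nonempty (𝒞 : Set (G ⧸ Z)) := ⟨⟨φ x, hx⟩⟩
    refine SimpleGraph.Connected.mk ?_
    intro u v
    obtain ⟨a, rfl⟩ := hsurj u
    obtain ⟨b, rfl⟩ := hsurj v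
    exact reachable_map_aux f hedge (hconn.preconnected a b)
  · intro hcop
    have ho : orderOf g₀ = orderOf (φ x) := by
      obtain ⟨c, hc⟩ := hxc
      exact SemiconjBy.orderOf_eq _ hc
    have h1lt : 1 < orderOf g₀ := by
      rcases Nat.lt_or_ge (orderOf g₀) 2 with h | h
      · interval_cases h' : orderOf g₀
        · exact absurd (orderOf_eq_zero_iff.mp h') (by
            exact fun hni => hni.elim (isOfFinOrder_of_finite g₀))
        · exact absurd (h𝒞 ▸ (orderOf_eq_one_iff.mp h' ▸ IsConj.refl g₀ : IsConj g₀ 1)) h1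
      · exact h
    set o := orderOf g₀ with ho'
    set m := Nat.card Z with hm
    obtain ⟨m', -, hm'⟩ := Nat.exists_mul_mod_eq_one_of_coprime hcop.symm h1lt
    refine ⟨x ^ (m * m'), ?_, ?_⟩
    · have hφx' : φ (x ^ (m * m')) = φ x := by
        rw [map_pow, ← pow_mod_orderOf, ← ho, hm', pow_one]
      have hdvd1 : o ∣ orderOf (x ^ (m * m')) := by
        have := orderOf_map_dvd φ (x ^ (m * m'))
        rw [hφx', ← ho] at this
        exact this
      have hxoZ : x ^ o ∈ Z := by
        have hpow : φ (x ^ o) = 1 := by rw [map_pow, ho, pow_orderOf_eq_one]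
        exact (QuotientGroup.eq_one_iff _).mp hpow
      have hdvd2 : orderOf (x ^ (m * m')) ∣ o := by
        apply orderOf_dvd_of_pow_eq_one
        have hz : ((⟨x ^ o, hxoZ⟩ : Z) : G) ^ m = 1 := by
          rw [← Subgroup.coe_pow, pow_card_eq_one', Subgroup.coe_one]
        calc (x ^ (m * m')) ^ o = ((x ^ o) ^ m) ^ m' := by
              rw [← pow_mul, ← pow_mul, ← pow_mul]; ring_nf
          _ = 1 := by rw [show (x ^ o) ^ m = 1 from hz, one_pow]
      exact Nat.dvd_antisymm hdvd2 hdvd1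
    · have hφx' : φ (x ^ (m * m')) = φ x := by
        rw [map_pow, ← pow_mod_orderOf, ← ho, hm', pow_one]
      rw [show (QuotientGroup.mk (x ^ (m * m')) : G ⧸ Z) = φ (x ^ (m * m')) from rfl, hφx']
      exact hx
end

section
/- Let F be a finite field of characteristic 2, G = SL₂(F), and 𝒞 the set of involutions of G. Then the matrix K : 𝒞 × 𝒞 → ℚ defined by K(x,y) = |C_G(xy) ∩ 𝒞| is invertible (its determinant is nonzero); that is, the Killing form K_𝒞 is non-degenerate. -/
set_option linter.unusedSectionVars false

section KillingAux
variable {F : Type*} [Field F] [Fintype F] [DecidableEq F] [CharP F 2]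



lemma sq_injF {a b : F} (h : a * a = b * b) : a = b := by
  have h2 : (2 : F) = 0 := CharTwo.two_eq_zero
  have h3 : (a - b) * (a - b) = 0 := by linear_combination h + (b*b - a*b) * h2
  exact sub_eq_zero.mp (mul_self_eq_zero.mp h3)

/-- normal form of a square-zero 2×2 matrix -/
lemma nf {n : Matrix (Fin 2) (Fin 2) F} (h : n * n = 0) :
    n 1 1 = n 0 0 ∧ n 0 0 * n 0 0 = n 0 1 * n 1 0 := by
  have h2 : (2 : F) = 0 := CharTwo.two_eq_zero
  have e : ∀ i j, n i 0 * n 0 j + n i 1 * n 1 j = 0 := by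
    intro i j
    have := congrFun (congrFun h i) j
    simpa [Matrix.mul_apply, Fin.sum_univ_two] using this
  have e00 := e 0 0; have e11 := e 1 1
  have hd : n 1 1 = n 0 0 := sq_injF (by linear_combination e11 - e00)
  exact ⟨hd, by linear_combination (n 0 0 * n 0 0) * h2 - e00⟩

lemma nf' {n : Matrix (Fin 2) (Fin 2) F} (hd : n 1 1 = n 0 0)
    (hs : n 0 0 * n 0 0 = n 0 1 * n 1 0) : n * n = 0 := by
  have h2 : (2 : F) = 0 := CharTwo.two_eq_zero
  ext i j
  fin_cases i <;> fin_cases j <;>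
    simp only [Matrix.mul_apply, Fin.sum_univ_two, Matrix.zero_apply, hd, Fin.mk_zero, Fin.mk_one] <;>
    first
      | linear_combination hs + (n 0 1 * n 1 0) * h2
      | linear_combination (n 0 0 * n 0 1) * h2
      | linear_combination (n 0 0 * n 1 0) * h2

example : (2 : Matrix (Fin 2) (Fin 2) F) = 0 := CharTwo.two_eq_zero


lemma ext4 {m n : Matrix (Fin 2) (Fin 2) F} (u : F)
    (h00 : m 0 0 = u * n 0 0) (h01 : m 0 1 = u * n 0 1)
    (h10 : m 1 0 = u * n 1 0) (h11 : m 1 1 = u * n 1 1) : m = u • n := by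
  ext i j
  fin_cases i <;> fin_cases j <;>
    simp only [Fin.mk_zero, Fin.mk_one, Matrix.smul_apply, smul_eq_mul] <;>
    assumption

lemma nonzero_entry {n : Matrix (Fin 2) (Fin 2) F} (hnd : n 1 1 = n 0 0) (hn0 : n ≠ 0)
    (h00 : n 0 0 = 0) (h01 : n 0 1 = 0) (h10 : n 1 0 = 0) : False := by
  apply hn0
  ext i j
  fin_cases i <;> fin_cases j <;>
    simp only [Fin.mk_zero, Fin.mk_one, Matrix.zero_apply] <;>
    first | exact h00 | exact h01 | exact h10 | (rw [hnd]; exact h00)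


/-- two square-zero 2x2 matrices commute iff proportional -/
lemma commute_iff_prop {n m : Matrix (Fin 2) (Fin 2) F}
    (hn : n * n = 0) (hn0 : n ≠ 0) (hm : m * m = 0) (hm0 : m ≠ 0) :
    n * m = m * n ↔ ∃ u : F, u ≠ 0 ∧ m = u • n := by
  obtain ⟨hnd, hns⟩ := nf hn
  obtain ⟨hmd, hms⟩ := nf hm
  have h2 : (2 : F) = 0 := CharTwo.two_eq_zero
  constructor
  · intro hcom
    have key : n 0 1 * m 1 0 = n 1 0 * m 0 1 := by
      have := congrFun (congrFun hcom 0) 0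
      simp only [Matrix.mul_apply, Fin.sum_univ_two] at this
      linear_combination this
    have main : ∃ u : F, m = u • n := by
      rcases eq_or_ne (n 0 1) 0 with hb0 | hb0
      · rcases eq_or_ne (n 1 0) 0 with hc0 | hc0
        · exact absurd (sq_injF (by rw [hb0, hc0] at hns; linear_combination hns))
            fun ha0 => nonzero_entry hnd hn0 ha0 hb0 hc0
        · refine ⟨m 1 0 / n 1 0, ext4 _ ?_ ?_ ?_ ?_⟩
          · refine (sq_injF ?_).symm
            field_simp
            linear_combination (n 1 0 * n 1 0) * hms + (n 1 0 * m 1 0) * key.symm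
              - (m 1 0 * m 1 0) * hns
              + (m 1 0 * m 1 0 * n 0 0 * n 0 0 - n 1 0 * n 1 0 * m 0 0 * m 0 0) * h2
          · field_simp
            linear_combination - key
          · field_simp
          · rw [hmd, hnd]
            refine (sq_injF ?_).symm
            field_simp
            linear_combination (n 1 0 * n 1 0) * hms + (n 1 0 * m 1 0) * key.symm
              - (m 1 0 * m 1 0) * hns
              + (m 1 0 * m 1 0 * n 0 0 * n 0 0 - n 1 0 * n 1 0 * m 0 0 * m 0 0) * h2
      · refine ⟨m 0 1 / n 0 1, ext4 _ ?_ ?_ ?_ ?_⟩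
        · refine (sq_injF ?_).symm
          field_simp
          linear_combination (n 0 1 * n 0 1) * hms + (n 0 1 * m 0 1) * key
            - (m 0 1 * m 0 1) * hns
            + (m 0 1 * m 0 1 * n 0 0 * n 0 0 - n 0 1 * n 0 1 * m 0 0 * m 0 0) * h2
        · field_simp
        · field_simp
          linear_combination key
        · rw [hmd, hnd]
          refine (sq_injF ?_).symm
          field_simp
          linear_combination (n 0 1 * n 0 1) * hms + (n 0 1 * m 0 1) * key
            - (m 0 1 * m 0 1) * hns
            + (m 0 1 * m 0 1 * n 0 0 * n 0 0 - n 0 1 * n 0 1 * m 0 0 * m 0 0) * h2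
      
    obtain ⟨u, hmu⟩ := main
    refine ⟨u, ?_, hmu⟩
    rintro rfl
    rw [zero_smul] at hmu
    exact hm0 hmu
  · rintro ⟨u, -, rfl⟩
    simp [Matrix.mul_smul, Matrix.smul_mul]


/-- a square-zero nonzero matrix cannot commute with an invertible matrix of nonzero trace -/
lemma no_sqzero_commute {p g : Matrix (Fin 2) (Fin 2) F}
    (hp : p * p = 0) (hp0 : p ≠ 0) (htr : g 0 0 + g 1 1 ≠ 0)
    (hcom : p * g = g * p) : False := by
  obtain ⟨hpd, hps⟩ := nf hp
  have e : ∀ i j, p i 0 * g 0 j + p i 1 * g 1 j = g i 0 * p 0 j + g i 1 * p 1 j := by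
    intro i j
    have := congrFun (congrFun hcom i) j
    simpa [Matrix.mul_apply, Fin.sum_univ_two] using this
  have h2 : (2 : F) = 0 := CharTwo.two_eq_zero
  rcases eq_or_ne (p 0 1) 0 with hb0 | hb0
  · rcases eq_or_ne (p 1 0) 0 with hc0 | hc0
    · exact nonzero_entry hpd hp0
        (sq_injF (by rw [hb0, hc0] at hps; linear_combination hps)) hb0 hc0
    · -- (2,1) entry : p10 g00 + p11 g10 = g10 p00 + g11 p10  ⇒ p10 (g00 - g11) = 0
      have := e 1 0
      rw [hpd] at this
      apply htr
      have hzw : g 0 0 = g 1 1 := by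
        have hfac : p 1 0 * (g 0 0 - g 1 1) = 0 := by linear_combination this
        exact sub_eq_zero.mp ((mul_eq_zero.mp hfac).resolve_left hc0)
      rw [hzw]
      linear_combination (g 1 1) * h2
  · -- (1,2) entry : p00 g01 + p01 g11 = g00 p01 + g01 p11 ⇒ p01(g11 - g00) = 0
    have := e 0 1
    rw [hpd] at this
    apply htr
    have hzw : g 0 0 = g 1 1 := by
      have hfac : p 0 1 * (g 1 1 - g 0 0) = 0 := by linear_combination this
      exact (sub_eq_zero.mp ((mul_eq_zero.mp hfac).resolve_left hb0)).symm
    rw [hzw]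
    linear_combination (g 1 1) * h2

/-- determinant of 1 + squarezero is 1 -/
lemma det_one_add_sqzero {p : Matrix (Fin 2) (Fin 2) F} (hp : p * p = 0) :
    (1 + p).det = 1 := by
  obtain ⟨hpd, hps⟩ := nf hp
  have h2 : (2 : F) = 0 := CharTwo.two_eq_zero
  rw [Matrix.det_fin_two]
  simp only [Matrix.add_apply, Matrix.one_apply_eq, Matrix.one_apply_ne (by decide : (0:Fin 2) ≠ 1),
    Matrix.one_apply_ne (by decide : (1:Fin 2) ≠ 0), zero_add]
  rw [hpd]
  linear_combination hps + (p 0 0) * h2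

/-- if the product of two "involutions" has zero trace then the nilpotent parts commute -/
lemma trace_zero_commute {n m : Matrix (Fin 2) (Fin 2) F}
    (hn : n * n = 0) (hm : m * m = 0)
    (htr : ((1 + n) * (1 + m)) 0 0 + ((1 + n) * (1 + m)) 1 1 = 0) :
    n * m = m * n := by
  obtain ⟨hnd, hns⟩ := nf hn
  obtain ⟨hmd, hms⟩ := nf hm
  have h2 : (2 : F) = 0 := CharTwo.two_eq_zero
  simp only [Matrix.mul_apply, Matrix.add_apply, Fin.sum_univ_two,
    Matrix.one_apply_eq, Matrix.one_apply_ne (by decide : (0:Fin 2) ≠ 1),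
    Matrix.one_apply_ne (by decide : (1:Fin 2) ≠ 0), zero_add, add_zero] at htr
  rw [hnd, hmd] at htr
  -- htr should now reduce to n01 m10 + n10 m01 + junk*2 = 0
  ext i j
  fin_cases i <;> fin_cases j <;>
    simp only [Fin.mk_zero, Fin.mk_one, Matrix.mul_apply, Fin.sum_univ_two, hnd, hmd]
  · linear_combination htr - (n 1 0 * m 0 1 + (1 + n 0 0) * (1 + m 0 0)) * h2
  · ring
  · ring
  · linear_combination htr - (n 0 1 * m 1 0 + (1 + n 0 0) * (1 + m 0 0)) * h2

/-- shift lemma : commuting after subtracting 1 -/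
lemma shift_commute {R : Type*} [Ring R] {A B : R} :
    A * B = B * A ↔ (A - 1) * (B - 1) = (B - 1) * (A - 1) := by
  constructor <;> intro h
  · have : (A - 1) * (B - 1) - (B - 1) * (A - 1) = A * B - B * A := by noncomm_ring
    rw [h, sub_self] at this
    exact sub_eq_zero.mp this
  · have : A * B - B * A = (A - 1) * (B - 1) - (B - 1) * (A - 1) := by noncomm_ring
    rw [h, sub_self] at this
    exact sub_eq_zero.mp this

/-- characterisation of involutions in SL₂ over char 2 -/
lemma invol_iff {x : Matrix.SpecialLinearGroup (Fin 2) F} :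
    x ∈ involSet (Matrix.SpecialLinearGroup (Fin 2) F) ↔
      ((x : Matrix (Fin 2) (Fin 2) F) - 1) * ((x : Matrix (Fin 2) (Fin 2) F) - 1) = 0 ∧
      ((x : Matrix (Fin 2) (Fin 2) F) - 1) ≠ 0 := by
  have h1 : (x ^ 2 = 1) ↔ ((x : Matrix (Fin 2) (Fin 2) F) - 1) *
      ((x : Matrix (Fin 2) (Fin 2) F) - 1) = 0 := by
    rw [sq, (show ∀ a b : Matrix.SpecialLinearGroup (Fin 2) F, a = b ↔ (a : Matrix (Fin 2) (Fin 2) F) = b from fun _ _ => Subtype.ext_iff), Matrix.SpecialLinearGroup.coe_mul,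
      Matrix.SpecialLinearGroup.coe_one]
    set A := (x : Matrix (Fin 2) (Fin 2) F)
    have hexp : (A - 1) * (A - 1) = A * A - 1 - (A + A - (1+1)) := by noncomm_ring
    have hA : A + A = 0 := CharTwo.add_self_eq_zero A
    have h11 : (1 + 1 : Matrix (Fin 2) (Fin 2) F) = 0 := CharTwo.add_self_eq_zero 1
    rw [hA, h11, sub_zero, sub_zero] at hexp
    rw [hexp]
    exact (sub_eq_zero (a := A * A)).symm
  have h2 : (x ≠ 1) ↔ ((x : Matrix (Fin 2) (Fin 2) F) - 1) ≠ 0 := by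
    rw [not_iff_not, (show ∀ a b : Matrix.SpecialLinearGroup (Fin 2) F, a = b ↔ (a : Matrix (Fin 2) (Fin 2) F) = b from fun _ _ => Subtype.ext_iff), Matrix.SpecialLinearGroup.coe_one, sub_eq_zero]
  exact and_congr h1 h2

/-- commuting of SL elements via coe -/
lemma commute_coe {x y : Matrix.SpecialLinearGroup (Fin 2) F} :
    Commute x y ↔ (x : Matrix (Fin 2) (Fin 2) F) * y = (y : Matrix (Fin 2) (Fin 2) F) * x := by
  rw [Commute, SemiconjBy, (show ∀ a b : Matrix.SpecialLinearGroup (Fin 2) F, a = b ↔ (a : Matrix (Fin 2) (Fin 2) F) = b from fun _ _ => Subtype.ext_iff)]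
  simp

/-- the centraliser set of an involution -/
lemma cent_card {g : Matrix.SpecialLinearGroup (Fin 2) F}
    (hg : g ∈ involSet (Matrix.SpecialLinearGroup (Fin 2) F)) :
    Set.ncard {c | c ∈ involSet (Matrix.SpecialLinearGroup (Fin 2) F) ∧ Commute c g}
      = Fintype.card F - 1 := by
  obtain ⟨hk, hk0⟩ := invol_iff.mp hg
  set k : Matrix (Fin 2) (Fin 2) F := (g : Matrix (Fin 2) (Fin 2) F) - 1 with hkdef
  have hsq : ∀ u : F, (u • k) * (u • k) = 0 := fun u => by
    rw [Matrix.smul_mul, Matrix.mul_smul, hk, smul_zero, smul_zero]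
  let f : {u : F // u ≠ 0} → Matrix.SpecialLinearGroup (Fin 2) F :=
    fun u => ⟨1 + (u : F) • k, det_one_add_sqzero (hsq u)⟩
  have hset : {c | c ∈ involSet (Matrix.SpecialLinearGroup (Fin 2) F) ∧ Commute c g}
      = f '' Set.univ := by
    ext c
    simp only [Set.mem_setOf_eq, Set.image_univ, Set.mem_range]
    constructor
    · rintro ⟨hc, hcom⟩
      obtain ⟨hp, hp0⟩ := invol_iff.mp hc
      have hmat : (c : Matrix (Fin 2) (Fin 2) F) * g = (g : Matrix (Fin 2) (Fin 2) F) * c :=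
        commute_coe.mp hcom
      have hpk := shift_commute.mp hmat
      have hkp : k * ((c : Matrix (Fin 2) (Fin 2) F) - 1)
          = ((c : Matrix (Fin 2) (Fin 2) F) - 1) * k := hpk.symm
      obtain ⟨u, hu, hup⟩ := (commute_iff_prop hk hk0 hp hp0).mp hkp
      refine ⟨⟨u, hu⟩, ?_⟩
      apply Subtype.ext
      show (1 : Matrix (Fin 2) (Fin 2) F) + u • k = c
      rw [← hup]
      abel
    · rintro ⟨⟨u, hu⟩, rfl⟩
      constructor
      · apply invol_iff.mpr
        rw [show ((f ⟨u, hu⟩ : Matrix.SpecialLinearGroup (Fin 2) F) :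
            Matrix (Fin 2) (Fin 2) F) = 1 + u • k from rfl, add_sub_cancel_left]
        exact ⟨hsq u, smul_ne_zero hu hk0⟩
      · apply commute_coe.mpr
        apply shift_commute.mpr
        rw [show ((f ⟨u, hu⟩ : Matrix.SpecialLinearGroup (Fin 2) F) :
            Matrix (Fin 2) (Fin 2) F) = 1 + u • k from rfl, add_sub_cancel_left]
        show (u • k) * ((g : Matrix (Fin 2) (Fin 2) F) - 1)
            = ((g : Matrix (Fin 2) (Fin 2) F) - 1) * (u • k)
        rw [← hkdef, Matrix.smul_mul, Matrix.mul_smul, hk, smul_zero]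
  have hinj : Function.Injective f := by
    rintro ⟨u, hu⟩ ⟨v, hv⟩ h
    have := congrArg (fun z => (z : Matrix.SpecialLinearGroup (Fin 2) F).val) h
    simp only [f] at this
    have h3 : u • k = v • k := by
      have := add_left_cancel this
      exact this
    have h4 : (u - v) • k = 0 := by rw [sub_smul, h3, sub_self]
    rcases smul_eq_zero.mp h4 with h5 | h5
    · exact Subtype.ext (sub_eq_zero.mp h5)
    · exact absurd h5 hk0
  rw [hset, Set.ncard_image_of_injective _ hinj, Set.ncard_univ]
  rw [Nat.card_congr (unitsEquivNeZero (G₀ := F)).symm, Nat.card_eq_fintype_card,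
    Fintype.card_units]

/-- product of distinct commuting involutions is an involution -/
lemma mul_mem_invol {G : Type*} [Group G] {x y : G} (hx : x ∈ involSet G)
    (hy : y ∈ involSet G) (hne : x ≠ y) (hcom : Commute x y) : x * y ∈ involSet G := by
  refine ⟨?_, ?_⟩
  · rw [hcom.mul_pow, hx.1, hy.1, one_mul]
  · intro h
    apply hne
    have hx2 : x * x = 1 := by rw [← sq]; exact hx.1
    exact ((eq_inv_of_mul_eq_one_right h).trans (inv_eq_of_mul_eq_one_right hx2)).symm

/-- no involution commutes with product of two noncommuting involutions -/
lemma noncomm_empty {x y : Matrix.SpecialLinearGroup (Fin 2) F}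
    (hx : x ∈ involSet (Matrix.SpecialLinearGroup (Fin 2) F))
    (hy : y ∈ involSet (Matrix.SpecialLinearGroup (Fin 2) F))
    (hcom : ¬ Commute x y) :
    {c | c ∈ involSet (Matrix.SpecialLinearGroup (Fin 2) F) ∧ Commute c (x * y)} = ∅ := by
  obtain ⟨hn, hn0⟩ := invol_iff.mp hx
  obtain ⟨hm, hm0⟩ := invol_iff.mp hy
  set X : Matrix (Fin 2) (Fin 2) F := (x : Matrix (Fin 2) (Fin 2) F)
  set Y : Matrix (Fin 2) (Fin 2) F := (y : Matrix (Fin 2) (Fin 2) F)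
  have hXY : ((x * y : Matrix.SpecialLinearGroup (Fin 2) F) : Matrix (Fin 2) (Fin 2) F)
      = X * Y := by simp [X, Y]
  have hXform : X = 1 + (X - 1) := by abel
  have hYform : Y = 1 + (Y - 1) := by abel
  have htr : (X * Y) 0 0 + (X * Y) 1 1 ≠ 0 := by
    intro h0
    apply hcom
    apply commute_coe.mpr
    apply shift_commute.mpr
    apply trace_zero_commute hn hm
    rw [← hXform, ← hYform]
    exact h0
  ext c
  simp only [Set.mem_setOf_eq, Set.mem_empty_iff_false, iff_false, not_and]
  intro hc hccom
  obtain ⟨hp, hp0⟩ := invol_iff.mp hc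
  have hmat : (c : Matrix (Fin 2) (Fin 2) F) * (X * Y)
      = (X * Y) * (c : Matrix (Fin 2) (Fin 2) F) := by
    have := commute_coe.mp hccom
    rwa [hXY] at this
  -- p commutes with X*Y : (c-1)(XY) = (XY)(c-1)
  have hpg : ((c : Matrix (Fin 2) (Fin 2) F) - 1) * (X * Y)
      = (X * Y) * ((c : Matrix (Fin 2) (Fin 2) F) - 1) := by
    have h1 : ((c : Matrix (Fin 2) (Fin 2) F) - 1) * (X * Y)
        = (c : Matrix (Fin 2) (Fin 2) F) * (X * Y) - (X * Y) := by noncomm_ring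
    have h2 : (X * Y) * ((c : Matrix (Fin 2) (Fin 2) F) - 1)
        = (X * Y) * (c : Matrix (Fin 2) (Fin 2) F) - (X * Y) := by noncomm_ring
    rw [h1, h2, hmat]
  exact no_sqzero_commute hp hp0 htr hpg

/-- lower bound on the number of involutions -/
lemma invol_card_lb :
    Fintype.card F * (Fintype.card F - 1)
      ≤ Set.ncard (involSet (Matrix.SpecialLinearGroup (Fin 2) F)) := by
  have hsqz : ∀ (a : F) (b : {b : F // b ≠ 0}),
      (!![a, (b:F); a * a / b, a] : Matrix (Fin 2) (Fin 2) F) *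
        !![a, (b:F); a * a / b, a] = 0 := by
    intro a b
    apply nf'
    · rfl
    · show a * a = (b : F) * (a * a / (b : F))
      rw [mul_div_cancel₀ _ b.2]
  let φ : F × {b : F // b ≠ 0} → Matrix.SpecialLinearGroup (Fin 2) F :=
    fun p => ⟨1 + !![p.1, (p.2 : F); p.1 * p.1 / p.2, p.1],
      det_one_add_sqzero (hsqz p.1 p.2)⟩
  have hsub : φ '' Set.univ ⊆ involSet (Matrix.SpecialLinearGroup (Fin 2) F) := by
    rintro - ⟨⟨a, b⟩, -, rfl⟩
    apply invol_iff.mpr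
    rw [show ((φ (a, b) : Matrix.SpecialLinearGroup (Fin 2) F) :
        Matrix (Fin 2) (Fin 2) F) = 1 + !![a, (b:F); a * a / b, a] from rfl,
      add_sub_cancel_left]
    refine ⟨hsqz a b, fun h => b.2 ?_⟩
    have := congrFun (congrFun h 0) 1
    simpa using this
  have hinj : Function.Injective φ := by
    rintro ⟨a, b⟩ ⟨a', b'⟩ h
    have h1 : (1 : Matrix (Fin 2) (Fin 2) F) + !![a, (b:F); a * a / b, a]
        = 1 + !![a', (b':F); a' * a' / b', a'] := congrArg Subtype.val h
    have h2 := add_left_cancel h1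
    have ha : a = a' := by have := congrFun (congrFun h2 0) 0; simpa using this
    have hb : (b : F) = (b' : F) := by have := congrFun (congrFun h2 0) 1; simpa using this
    exact Prod.ext ha (Subtype.ext hb)
  calc Fintype.card F * (Fintype.card F - 1)
      = Set.ncard (φ '' Set.univ) := by
        rw [Set.ncard_image_of_injective _ hinj, Set.ncard_univ, Nat.card_eq_fintype_card,
          Fintype.card_prod]
        congr 1
        rw [← Fintype.card_units (α := F)]
        exact Fintype.card_congr (unitsEquivNeZero (G₀ := F))
    _ ≤ _ := Set.ncard_le_ncard hsub (Set.toFinite _)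

/-- bound on number of involutions commuting with a fixed involution, other than itself -/
lemma neighbor_bound {x : Matrix.SpecialLinearGroup (Fin 2) F}
    (hx : x ∈ involSet (Matrix.SpecialLinearGroup (Fin 2) F))
    (s : Finset (involSet (Matrix.SpecialLinearGroup (Fin 2) F)))
    (hs : ∀ y ∈ s, ((y : Matrix.SpecialLinearGroup (Fin 2) F) ≠ x ∧
      Commute ((y : Matrix.SpecialLinearGroup (Fin 2) F)) x)) :
    s.card ≤ Fintype.card F - 2 := by
  classical
  obtain ⟨hn, hn0⟩ := invol_iff.mp hx
  set n : Matrix (Fin 2) (Fin 2) F := (x : Matrix (Fin 2) (Fin 2) F) - 1 with hndef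
  obtain ⟨i0, j0, hij⟩ : ∃ i j, n i j ≠ 0 := by
    by_contra h
    push_neg at h
    exact hn0 (by ext i j; simpa using h i j)
  set ψ : (involSet (Matrix.SpecialLinearGroup (Fin 2) F)) → F :=
    fun y => (((y : Matrix.SpecialLinearGroup (Fin 2) F) : Matrix (Fin 2) (Fin 2) F) - 1) i0 j0
      / n i0 j0 with hψ
  have key : ∀ y ∈ s, ψ y ≠ 0 ∧ ψ y ≠ 1 ∧
      ((y : Matrix.SpecialLinearGroup (Fin 2) F) : Matrix (Fin 2) (Fin 2) F) = 1 + ψ y • n := by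
    intro y hy
    obtain ⟨hyne, hycom⟩ := hs y hy
    obtain ⟨hp, hp0⟩ := invol_iff.mp y.2
    have hmat := commute_coe.mp hycom
    have hnp := shift_commute.mp hmat.symm
    obtain ⟨u, hu, hup⟩ := (commute_iff_prop hn hn0 hp hp0).mp hnp
    have hψu : ψ y = u := by
      rw [hψ]
      simp only
      rw [hup, Matrix.smul_apply, smul_eq_mul, mul_div_cancel_right₀ _ hij]
    have hyval : ((y : Matrix.SpecialLinearGroup (Fin 2) F) : Matrix (Fin 2) (Fin 2) F)
        = 1 + ψ y • n := by
      rw [hψu, ← hup]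
      abel
    refine ⟨hψu ▸ hu, ?_, hyval⟩
    intro h1
    apply hyne
    apply Subtype.ext
    rw [hyval, h1, one_smul, hndef]
    abel
  have hT : ∀ y ∈ s, ψ y ∈ (Finset.univ.erase (1 : F)).erase (0 : F) := by
    intro y hy
    obtain ⟨h0, h1, -⟩ := key y hy
    exact Finset.mem_erase.mpr ⟨h0, Finset.mem_erase.mpr ⟨h1, Finset.mem_univ _⟩⟩
  have hinj : Set.InjOn ψ s := by
    intro y hy y' hy' h
    obtain ⟨-, -, e1⟩ := key y hy
    obtain ⟨-, -, e2⟩ := key y' hy'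
    apply Subtype.ext; apply Subtype.ext
    rw [e1, e2, h]
  have := Finset.card_le_card_of_injOn ψ hT hinj
  calc s.card ≤ ((Finset.univ.erase (1 : F)).erase (0 : F)).card := this
    _ = Fintype.card F - 2 := by
        rw [Finset.card_erase_of_mem (Finset.mem_erase.mpr ⟨zero_ne_one, Finset.mem_univ _⟩),
          Finset.card_erase_of_mem (Finset.mem_univ _), Finset.card_univ, Nat.sub_sub]


lemma qnorm (N : ℕ) : ‖((N : ℕ) : ℚ)‖ = (N : ℝ) := by
  rw [← Rat.norm_cast_real]; push_cast; simp


end KillingAux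

/-- The Killing form on the set of involutions of `SL₂(F)`, `F` a finite field of
characteristic `2`, is non-degenerate: the matrix of the Killing form over `ℚ` has
nonzero determinant. -/
theorem statement2 {F : Type*} [Field F] [Fintype F] [DecidableEq F] [CharP F 2]
    [Fintype (involSet (Matrix.SpecialLinearGroup (Fin 2) F))]
    [DecidableEq (involSet (Matrix.SpecialLinearGroup (Fin 2) F))] :
    (killingMatrix (involSet (Matrix.SpecialLinearGroup (Fin 2) F))).det ≠ 0 := by
  classical
  apply det_ne_zero_of_sum_row_lt_diag
  intro x
  have hq2 : 2 ≤ Fintype.card F := Fintype.one_lt_card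
  have hq0 : 0 < Fintype.card F := lt_of_lt_of_le two_pos hq2
  -- diagonal entry
  have hdiag : ‖killingMatrix (involSet (Matrix.SpecialLinearGroup (Fin 2) F)) x x‖ =
      ((Set.ncard (involSet (Matrix.SpecialLinearGroup (Fin 2) F)) : ℕ) : ℝ) := by
    have h1 : ((x : Matrix.SpecialLinearGroup (Fin 2) F) *
        (x : Matrix.SpecialLinearGroup (Fin 2) F)) = 1 := by
      rw [← sq]; exact x.2.1
    have h2 : {c ∈ involSet (Matrix.SpecialLinearGroup (Fin 2) F) |
        Commute c ((x : Matrix.SpecialLinearGroup (Fin 2) F) *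
          (x : Matrix.SpecialLinearGroup (Fin 2) F))}
        = involSet (Matrix.SpecialLinearGroup (Fin 2) F) := by
      rw [h1]
      ext c
      simp [Commute.one_right]
    show ‖((Set.ncard {c ∈ involSet (Matrix.SpecialLinearGroup (Fin 2) F) |
        Commute c ((x : Matrix.SpecialLinearGroup (Fin 2) F) *
          (x : Matrix.SpecialLinearGroup (Fin 2) F))} : ℕ) : ℚ)‖ = _
    rw [h2, qnorm]
  -- off-diagonal entries
  have hoff : ∀ y ∈ Finset.univ.erase x,
      ‖killingMatrix (involSet (Matrix.SpecialLinearGroup (Fin 2) F)) x y‖ =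
      if Commute ((y : Matrix.SpecialLinearGroup (Fin 2) F))
        ((x : Matrix.SpecialLinearGroup (Fin 2) F)) then ((Fintype.card F - 1 : ℕ) : ℝ)
      else 0 := by
    intro y hy
    have hyx : y ≠ x := (Finset.mem_erase.mp hy).1
    have hne : (x : Matrix.SpecialLinearGroup (Fin 2) F) ≠ y :=
      fun h => hyx (Subtype.ext h.symm)
    by_cases hcom : Commute ((y : Matrix.SpecialLinearGroup (Fin 2) F))
        ((x : Matrix.SpecialLinearGroup (Fin 2) F))
    · rw [if_pos hcom]
      have hmem : ((x : Matrix.SpecialLinearGroup (Fin 2) F) *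
          (y : Matrix.SpecialLinearGroup (Fin 2) F)) ∈
          involSet (Matrix.SpecialLinearGroup (Fin 2) F) :=
        mul_mem_invol x.2 y.2 hne hcom.symm
      show ‖((Set.ncard {c ∈ involSet (Matrix.SpecialLinearGroup (Fin 2) F) |
          Commute c ((x : Matrix.SpecialLinearGroup (Fin 2) F) *
            (y : Matrix.SpecialLinearGroup (Fin 2) F))} : ℕ) : ℚ)‖ = _
      rw [show {c ∈ involSet (Matrix.SpecialLinearGroup (Fin 2) F) |
          Commute c ((x : Matrix.SpecialLinearGroup (Fin 2) F) *
            (y : Matrix.SpecialLinearGroup (Fin 2) F))}.ncard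
          = Fintype.card F - 1 from cent_card hmem]
      rw [qnorm]
    · rw [if_neg hcom]
      have hncom : ¬ Commute ((x : Matrix.SpecialLinearGroup (Fin 2) F))
          ((y : Matrix.SpecialLinearGroup (Fin 2) F)) := fun h => hcom h.symm
      show ‖((Set.ncard {c ∈ involSet (Matrix.SpecialLinearGroup (Fin 2) F) |
          Commute c ((x : Matrix.SpecialLinearGroup (Fin 2) F) *
            (y : Matrix.SpecialLinearGroup (Fin 2) F))} : ℕ) : ℚ)‖ = _
      rw [show {c ∈ involSet (Matrix.SpecialLinearGroup (Fin 2) F) |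
          Commute c ((x : Matrix.SpecialLinearGroup (Fin 2) F) *
            (y : Matrix.SpecialLinearGroup (Fin 2) F))} = ∅ from noncomm_empty x.2 y.2 hncom]
      simp
  rw [Finset.sum_congr rfl hoff, hdiag]
  rw [Finset.sum_ite, Finset.sum_const, Finset.sum_const, smul_zero, add_zero, nsmul_eq_mul]
  have hcard : (Finset.filter (fun y : ↥(involSet (Matrix.SpecialLinearGroup (Fin 2) F)) =>
      Commute ((y : Matrix.SpecialLinearGroup (Fin 2) F))
      ((x : Matrix.SpecialLinearGroup (Fin 2) F))) (Finset.univ.erase x)).card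
      ≤ Fintype.card F - 2 := by
    apply neighbor_bound x.2
    intro y hy
    have h1 := Finset.mem_filter.mp hy
    exact ⟨fun h => (Finset.mem_erase.mp h1.1).1 (Subtype.ext h), h1.2⟩
  have hlb := invol_card_lb (F := F)
  calc ((Finset.filter _ (Finset.univ.erase x)).card : ℝ) * ((Fintype.card F - 1 : ℕ) : ℝ)
      ≤ ((Fintype.card F - 2 : ℕ) : ℝ) * ((Fintype.card F - 1 : ℕ) : ℝ) := by
        apply mul_le_mul_of_nonneg_right _ (by positivity)
        exact_mod_cast hcard
    _ < ((Fintype.card F : ℕ) : ℝ) * ((Fintype.card F - 1 : ℕ) : ℝ) := by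
        apply mul_lt_mul_of_pos_right
        · exact_mod_cast Nat.sub_lt hq0 two_pos
        · have h1 : 1 ≤ Fintype.card F - 1 := Nat.le_sub_one_of_lt hq2
          exact_mod_cast lt_of_lt_of_le zero_lt_one (by exact_mod_cast h1)
    _ ≤ ((Set.ncard (involSet (Matrix.SpecialLinearGroup (Fin 2) F)) : ℕ) : ℝ) := by
        exact_mod_cast hlb
end

section
/- Let F be a finite field of odd characteristic p, G = SL₂(F), and let 𝒞 be a conjugacy class of elements of order p in G. Let y₁ ∈ 𝒞 and let S₁, S₂ be distinct Sylow p-subgroups of G with y₁ ∈ S₁. Then there exists a unique y₂ ∈ S₂ ∩ 𝒞 such that y₁y₂ = u·z for some u ∈ G with u^p = 1 and u ≠ 1 and some z in the center of G (i.e., y₁y₂ is the product of a non-trivial unipotent element and a central element). -/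
open Matrix

namespace Statement3Aux

variable {F : Type*} [Field F]

/-- Cayley–Hamilton for 2×2 matrices. -/
lemma sq_eq (M : Matrix (Fin 2) (Fin 2) F) : M * M = M.trace • M - M.det • 1 := by
  ext i j
  fin_cases i <;> fin_cases j <;>
    simp [Matrix.mul_apply, Fin.sum_univ_two, Matrix.trace_fin_two, Matrix.det_fin_two,
      Matrix.one_apply] <;> ring

lemma nilp_two {M : Matrix (Fin 2) (Fin 2) F} (h : IsNilpotent M) :
    M.trace = 0 ∧ M * M = 0 := by
  obtain ⟨k, hk⟩ := h
  have hdet : M.det = 0 := by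
    have h1 : M.det ^ k = 0 := by rw [← Matrix.det_pow, hk]; simp
    exact pow_eq_zero_iff'.mp h1 |>.1
  have hsq : M * M = M.trace • M := by rw [sq_eq, hdet]; simp
  by_cases hM : M = 0
  · simp [hM, Matrix.trace]
  have htr : M.trace = 0 := by
    have hpow : ∀ j : ℕ, M ^ (j + 1) = M.trace ^ j • M := by
      intro j
      induction j with
      | zero => simp [pow_one]
      | succ n ih =>
        rw [pow_succ, ih, smul_mul_assoc, hsq, smul_smul, ← pow_succ]
    have h2 : M.trace ^ k • M = 0 := by
      rw [← hpow k, pow_succ, hk, zero_mul]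
    have h3 : M.trace ^ k = 0 := by
      by_contra h4
      exact hM (by simpa [smul_eq_zero, h4] using h2)
    exact pow_eq_zero_iff'.mp h3 |>.1
  exact ⟨htr, by rw [hsq, htr, zero_smul]⟩

variable (p : ℕ) [Fact p.Prime] [CharP F p]

lemma trace_eq_two_of_pow {M : Matrix (Fin 2) (Fin 2) F} {k : ℕ}
    (hM : M ^ p ^ k = 1) : M.trace = 2 := by
  have hnil : IsNilpotent (M - 1) := by
    refine ⟨p ^ k, ?_⟩
    rw [sub_pow_char_pow_of_commute _ _ (Commute.one_right M), hM, one_pow, sub_self]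
  have h1 := (nilp_two hnil).1
  have htr : (M - 1).trace = M.trace - 2 := by
    rw [Matrix.trace_sub, Matrix.trace_one]; norm_num
  rw [htr] at h1
  exact sub_eq_zero.mp h1

lemma pow_p_eq_one_of_trace {M : Matrix (Fin 2) (Fin 2) F} (hd : M.det = 1)
    (ht : M.trace = 2) : M ^ p = 1 := by
  have hsq : (M - 1) * (M - 1) = 0 := by
    have h0 := sq_eq M
    rw [hd, ht] at h0
    rw [sub_mul, mul_sub, mul_sub, h0]
    ext i j
    fin_cases i <;> fin_cases j <;>
      simp [Matrix.one_apply, two_smul] <;> ring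
  have h2 : (M - 1) ^ p = 0 := by
    have hp2 : 2 ≤ p := (Fact.out : p.Prime).two_le
    calc (M - 1) ^ p = (M - 1) * (M - 1) * (M - 1) ^ (p - 2) := by
          rw [← pow_two, ← pow_add]; congr 1; omega
      _ = 0 := by rw [hsq, zero_mul]
  have h3 : M ^ p - 1 = 0 := by
    rw [← one_pow p, ← sub_pow_char_of_commute _ (Commute.one_right M), h2]
  have h4 := sub_eq_zero.mp h3
  simpa using h4

def up (a : F) : SpecialLinearGroup (Fin 2) F :=
  ⟨!![1, a; 0, 1], by simp [Matrix.det_fin_two_of]⟩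

def lo (a : F) : SpecialLinearGroup (Fin 2) F :=
  ⟨!![1, 0; a, 1], by simp [Matrix.det_fin_two_of]⟩

@[simp] lemma up_coe (a : F) (i j : Fin 2) : (up a).1 i j = !![1, a; 0, 1] i j := rfl
@[simp] lemma lo_coe (a : F) (i j : Fin 2) : (lo a).1 i j = !![1, 0; a, 1] i j := rfl

variable (F) in
def Usub : Subgroup (SpecialLinearGroup (Fin 2) F) where
  carrier := {x | x.1 0 0 = 1 ∧ x.1 1 1 = 1 ∧ x.1 1 0 = 0}
  one_mem' := by
    refine ⟨?_, ?_, ?_⟩ <;> simp [SpecialLinearGroup.coe_one, Matrix.one_apply]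
  mul_mem' := by
    rintro x y ⟨hx1, hx2, hx3⟩ ⟨hy1, hy2, hy3⟩
    refine ⟨?_, ?_, ?_⟩ <;>
      simp [SpecialLinearGroup.coe_mul, Matrix.mul_apply, Fin.sum_univ_two,
        hx1, hx2, hx3, hy1, hy2, hy3]
  inv_mem' := by
    rintro x ⟨hx1, hx2, hx3⟩
    refine ⟨?_, ?_, ?_⟩ <;>
      rw [SpecialLinearGroup.SL2_inv_expl] <;> simp [hx1, hx2, hx3]

variable (F) in
def Lsub : Subgroup (SpecialLinearGroup (Fin 2) F) where
  carrier := {x | x.1 0 0 = 1 ∧ x.1 1 1 = 1 ∧ x.1 0 1 = 0}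
  one_mem' := by
    refine ⟨?_, ?_, ?_⟩ <;> simp [SpecialLinearGroup.coe_one, Matrix.one_apply]
  mul_mem' := by
    rintro x y ⟨hx1, hx2, hx3⟩ ⟨hy1, hy2, hy3⟩
    refine ⟨?_, ?_, ?_⟩ <;>
      simp [SpecialLinearGroup.coe_mul, Matrix.mul_apply, Fin.sum_univ_two,
        hx1, hx2, hx3, hy1, hy2, hy3]
  inv_mem' := by
    rintro x ⟨hx1, hx2, hx3⟩
    refine ⟨?_, ?_, ?_⟩ <;>
      rw [SpecialLinearGroup.SL2_inv_expl] <;> simp [hx1, hx2, hx3]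

lemma mem_Usub {x : SpecialLinearGroup (Fin 2) F} :
    x ∈ Usub F ↔ x.1 0 0 = 1 ∧ x.1 1 1 = 1 ∧ x.1 1 0 = 0 := Iff.rfl

lemma mem_Lsub {x : SpecialLinearGroup (Fin 2) F} :
    x ∈ Lsub F ↔ x.1 0 0 = 1 ∧ x.1 1 1 = 1 ∧ x.1 0 1 = 0 := Iff.rfl

lemma up_mem (a : F) : up a ∈ Usub F := ⟨rfl, rfl, rfl⟩

lemma lo_mem (a : F) : lo a ∈ Lsub F := ⟨rfl, rfl, rfl⟩

lemma eq_up_of_mem {x : SpecialLinearGroup (Fin 2) F} (hx : x ∈ Usub F) :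
    x = up (x.1 0 1) := by
  obtain ⟨h1, h2, h3⟩ := hx
  apply Subtype.ext
  ext i j
  fin_cases i <;> fin_cases j <;> simp [h1, h2, h3]

lemma eq_lo_of_mem {x : SpecialLinearGroup (Fin 2) F} (hx : x ∈ Lsub F) :
    x = lo (x.1 1 0) := by
  obtain ⟨h1, h2, h3⟩ := hx
  apply Subtype.ext
  ext i j
  fin_cases i <;> fin_cases j <;> simp [h1, h2, h3]

@[simp] lemma lo_zero : (lo (0 : F)) = 1 := by
  apply Subtype.ext
  ext i j
  fin_cases i <;> fin_cases j <;> simp [SpecialLinearGroup.coe_one, Matrix.one_apply]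

@[simp] lemma up_zero : (up (0 : F)) = 1 := by
  apply Subtype.ext
  ext i j
  fin_cases i <;> fin_cases j <;> simp [SpecialLinearGroup.coe_one, Matrix.one_apply]

lemma trace_eq_two_of_mem_pgroup {Q : Subgroup (SpecialLinearGroup (Fin 2) F)}
    (hQ : IsPGroup p Q) {x : SpecialLinearGroup (Fin 2) F} (hx : x ∈ Q) :
    x.1.trace = 2 := by
  obtain ⟨k, hk⟩ := hQ ⟨x, hx⟩
  have h1 : x ^ p ^ k = 1 := by
    have := congrArg (Subgroup.subtype Q) hk
    simpa using this
  have h2 : (x.1 : Matrix (Fin 2) (Fin 2) F) ^ p ^ k = 1 := by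
    have := congrArg (fun y : SpecialLinearGroup (Fin 2) F => (y : Matrix (Fin 2) (Fin 2) F)) h1
    simpa [SpecialLinearGroup.coe_pow] using this
  exact trace_eq_two_of_pow p h2

lemma sl_pow_p_eq_one {x : SpecialLinearGroup (Fin 2) F} (ht : x.1.trace = 2) :
    x ^ p = 1 := by
  have hM : (x.1 : Matrix (Fin 2) (Fin 2) F) ^ p = 1 := pow_p_eq_one_of_trace p x.2 ht
  apply Subtype.ext
  simpa [SpecialLinearGroup.coe_pow] using hM

lemma isPGroup_Usub : IsPGroup p (Usub F) := by
  intro g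
  refine ⟨1, ?_⟩
  have htr : (g : SpecialLinearGroup (Fin 2) F).1.trace = 2 := by
    obtain ⟨h1, h2, _⟩ := g.2
    rw [Matrix.trace_fin_two, h1, h2]; norm_num
  have h1 : (g : SpecialLinearGroup (Fin 2) F) ^ p = 1 := sl_pow_p_eq_one p htr
  apply Subtype.ext
  simpa [pow_one, SubgroupClass.coe_pow] using h1

lemma isPGroup_Lsub : IsPGroup p (Lsub F) := by
  intro g
  refine ⟨1, ?_⟩
  have htr : (g : SpecialLinearGroup (Fin 2) F).1.trace = 2 := by
    obtain ⟨h1, h2, _⟩ := g.2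
    rw [Matrix.trace_fin_two, h1, h2]; norm_num
  have h1 : (g : SpecialLinearGroup (Fin 2) F) ^ p = 1 := sl_pow_p_eq_one p htr
  apply Subtype.ext
  simpa [pow_one, SubgroupClass.coe_pow] using h1

lemma diag_one_of {a : F} (h : a * (2 - a) = 1) : a = 1 := by
  have h2 : (a - 1) ^ 2 = 0 := by ring_nf; linear_combination -h
  have h3 := pow_eq_zero_iff' (M₀ := F) |>.mp h2 |>.1
  linear_combination h3

lemma maximal_Usub {Q : Subgroup (SpecialLinearGroup (Fin 2) F)}
    (hQ : IsPGroup p Q) (hle : Usub F ≤ Q) : Q ≤ Usub F := by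
  intro x hx
  have htr : x.1.trace = 2 := trace_eq_two_of_mem_pgroup p hQ hx
  have htr2 : (x * up 1).1.trace = 2 :=
    trace_eq_two_of_mem_pgroup p hQ (mul_mem hx (hle (up_mem 1)))
  have h10 : x.1 1 0 = 0 := by
    have h : (x * up 1).1.trace = x.1.trace + x.1 1 0 := by
      rw [Matrix.SpecialLinearGroup.coe_mul, Matrix.trace_fin_two, Matrix.trace_fin_two]
      simp [Matrix.mul_apply, Fin.sum_univ_two]
      ring
    rw [htr2, htr] at h
    linear_combination -h
  have hdet : x.1.det = 1 := x.2
  rw [Matrix.det_fin_two, h10] at hdet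
  have htr' : x.1 1 1 = 2 - x.1 0 0 := by
    rw [Matrix.trace_fin_two] at htr; linear_combination htr
  have h00 : x.1 0 0 = 1 := by
    apply diag_one_of
    rw [← htr']
    linear_combination hdet
  exact ⟨h00, by rw [htr', h00]; norm_num, h10⟩

lemma maximal_Lsub {Q : Subgroup (SpecialLinearGroup (Fin 2) F)}
    (hQ : IsPGroup p Q) (hle : Lsub F ≤ Q) : Q ≤ Lsub F := by
  intro x hx
  have htr : x.1.trace = 2 := trace_eq_two_of_mem_pgroup p hQ hx
  have htr2 : (x * lo 1).1.trace = 2 :=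
    trace_eq_two_of_mem_pgroup p hQ (mul_mem hx (hle (lo_mem 1)))
  have h01 : x.1 0 1 = 0 := by
    have h : (x * lo 1).1.trace = x.1.trace + x.1 0 1 := by
      rw [Matrix.SpecialLinearGroup.coe_mul, Matrix.trace_fin_two, Matrix.trace_fin_two]
      simp [Matrix.mul_apply, Fin.sum_univ_two]
      ring
    rw [htr2, htr] at h
    linear_combination -h
  have hdet : x.1.det = 1 := x.2
  rw [Matrix.det_fin_two, h01] at hdet
  have htr' : x.1 1 1 = 2 - x.1 0 0 := by
    rw [Matrix.trace_fin_two] at htr; linear_combination htr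
  have h00 : x.1 0 0 = 1 := by
    apply diag_one_of
    rw [← htr']
    linear_combination hdet
  exact ⟨h00, by rw [htr', h00]; norm_num, h01⟩

variable (F) in
def US : Sylow p (SpecialLinearGroup (Fin 2) F) where
  toSubgroup := Usub F
  isPGroup' := isPGroup_Usub p
  is_maximal' := fun hQ hle => le_antisymm (maximal_Usub p hQ hle) hle

variable (F) in
def LS : Sylow p (SpecialLinearGroup (Fin 2) F) where
  toSubgroup := Lsub F
  isPGroup' := isPGroup_Lsub p
  is_maximal' := fun hQ hle => le_antisymm (maximal_Lsub p hQ hle) hle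

@[simp] lemma US_coe : (US F p : Subgroup (SpecialLinearGroup (Fin 2) F)) = Usub F := rfl
@[simp] lemma LS_coe : (LS F p : Subgroup (SpecialLinearGroup (Fin 2) F)) = Lsub F := rfl

open Pointwise in
lemma mem_smul_sylow {G : Type*} [Group G] {q : ℕ} [Fact q.Prime] {g x : G}
    {S : Sylow q G} : x ∈ g • S ↔ g⁻¹ * x * g ∈ S := by
  have h : ((g • S : Sylow q G) : Subgroup G) = MulAut.conj g • (S : Subgroup G) :=
    Sylow.coe_subgroup_smul
  have h2 : (x ∈ g • S) = (x ∈ ((g • S : Sylow q G) : Subgroup G)) := rfl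
  rw [h2, h, Subgroup.mem_pointwise_smul_iff_inv_smul_mem]
  simp only [MulAut.smul_def, MulAut.conj_inv_apply]
  exact Iff.rfl

/-- If `m` has zero upper-left entry, conjugation by `m` sends `US` to `LS`. -/
lemma smul_US_eq_LS {m : SpecialLinearGroup (Fin 2) F} (hm : m.1 0 0 = 0) :
    m • US F p = LS F p := by
  have hdet : m.1 0 0 * m.1 1 1 - m.1 0 1 * m.1 1 0 = 1 := by
    rw [← Matrix.det_fin_two]; exact m.2
  rw [hm, zero_mul] at hdet
  have hle : ((m • US F p : Sylow p _) : Subgroup _) ≤ Lsub F := by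
    intro x hx
    have hw : m⁻¹ * x * m ∈ Usub F := mem_smul_sylow.mp hx
    have hx2 : x = m * (m⁻¹ * x * m) * m⁻¹ := by group
    set w := m⁻¹ * x * m with hwdef
    have hwu : w = up (w.1 0 1) := eq_up_of_mem hw
    rw [hwu] at hx2
    set c := w.1 0 1
    rw [mem_Lsub, hx2]
    rw [Matrix.SpecialLinearGroup.coe_mul, Matrix.SpecialLinearGroup.coe_mul,
      Matrix.SpecialLinearGroup.coe_inv, Matrix.adjugate_fin_two]
    refine ⟨?_, ?_, ?_⟩ <;>
      simp [Matrix.mul_apply, Fin.sum_univ_two, hm] <;>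
      first
        | linear_combination hdet
        | linear_combination -hdet
        | linear_combination 2 * hdet
        | linear_combination -2 * hdet
  have h2 := (m • US F p).is_maximal' (isPGroup_Lsub p) hle
  exact Sylow.ext (by rw [← h2]; rfl)

/-- If `m` has zero lower-left entry, conjugation by `m` fixes `US`. -/
lemma smul_US_eq_US {m : SpecialLinearGroup (Fin 2) F} (hm : m.1 1 0 = 0) :
    m • US F p = US F p := by
  have hdet : m.1 0 0 * m.1 1 1 - m.1 0 1 * m.1 1 0 = 1 := by
    rw [← Matrix.det_fin_two]; exact m.2
  rw [hm, mul_zero, sub_zero] at hdet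
  have hle : ((m • US F p : Sylow p _) : Subgroup _) ≤ Usub F := by
    intro x hx
    have hw : m⁻¹ * x * m ∈ Usub F := mem_smul_sylow.mp hx
    have hx2 : x = m * (m⁻¹ * x * m) * m⁻¹ := by group
    set w := m⁻¹ * x * m with hwdef
    have hwu : w = up (w.1 0 1) := eq_up_of_mem hw
    rw [hwu] at hx2
    set c := w.1 0 1
    rw [mem_Usub, hx2]
    rw [Matrix.SpecialLinearGroup.coe_mul, Matrix.SpecialLinearGroup.coe_mul,
      Matrix.SpecialLinearGroup.coe_inv, Matrix.adjugate_fin_two]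
    refine ⟨?_, ?_, ?_⟩ <;>
      simp [Matrix.mul_apply, Fin.sum_univ_two, hm] <;>
      first
        | linear_combination hdet
        | linear_combination -hdet
        | linear_combination 2 * hdet
        | linear_combination -2 * hdet
  have h2 := (m • US F p).is_maximal' (isPGroup_Usub p) hle
  exact Sylow.ext (by rw [← h2]; rfl)


lemma conj_pow_eq {G : Type*} [Group G] (g u : G) (n : ℕ) :
    (g * u * g⁻¹) ^ n = g * u ^ n * g⁻¹ := by
  have h := map_pow (MulAut.conj g) u n
  simpa [MulAut.conj_apply] using h

lemma conj_center {G : Type*} [Group G] {z : G} (hz : z ∈ Subgroup.center G) (g : G) :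
    g * z * g⁻¹ = z := by
  rw [Subgroup.mem_center_iff.mp hz g, mul_inv_cancel_right]

lemma decomp_conj {G : Type*} [Group G] (q : ℕ) {y₁ y₂ : G} (g : G)
    (h : ∃ u z, u ^ q = 1 ∧ u ≠ 1 ∧ z ∈ Subgroup.center G ∧ y₁ * y₂ = u * z) :
    ∃ u z, u ^ q = 1 ∧ u ≠ 1 ∧ z ∈ Subgroup.center G ∧
      (g * y₁ * g⁻¹) * (g * y₂ * g⁻¹) = u * z := by
  obtain ⟨u, z, hu, hune, hz, heq⟩ := h
  refine ⟨g * u * g⁻¹, z, ?_, ?_, hz, ?_⟩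
  · rw [conj_pow_eq, hu]; group
  · intro hh
    apply hune
    have h2 : u = g⁻¹ * (g * u * g⁻¹) * g := by group
    rw [hh] at h2
    simpa using h2
  · calc (g * y₁ * g⁻¹) * (g * y₂ * g⁻¹) = g * (y₁ * y₂) * g⁻¹ := by group
      _ = g * (u * z) * g⁻¹ := by rw [heq]
      _ = (g * u * g⁻¹) * (g * z * g⁻¹) := by group
      _ = (g * u * g⁻¹) * z := by rw [conj_center hz]

lemma one_not_conj {G : Type*} [Group G] {g₀ : G} (hg₀ : orderOf g₀ = p) :
    ¬ IsConj g₀ 1 := by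
  intro h
  obtain ⟨c, hc⟩ := isConj_iff.mp h.symm
  have hg : g₀ = 1 := by rw [← hc]; group
  rw [hg, orderOf_one] at hg₀
  exact (Fact.out : p.Prime).one_lt.ne hg₀

lemma two_ne_zero'' (hodd : Odd p) : (2 : F) ≠ 0 := by
  have h2 : ((2 : ℕ) : F) ≠ 0 := by
    rw [Ne, CharP.cast_eq_zero_iff F p]
    intro hdvd
    have h := (Nat.prime_dvd_prime_iff_eq (Fact.out) Nat.prime_two).mp hdvd
    rw [h] at hodd
    simp [Nat.odd_iff] at hodd
  simpa using h2

lemma core (hodd : Odd p) (g₀ : SpecialLinearGroup (Fin 2) F) (hg₀ : orderOf g₀ = p)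
    (𝒞 : Set (SpecialLinearGroup (Fin 2) F)) (h𝒞 : 𝒞 = {h | IsConj g₀ h})
    (y₁ : SpecialLinearGroup (Fin 2) F) (hy₁ : y₁ ∈ 𝒞) (hy₁U : y₁ ∈ Usub F) :
    ∃! y₂ : SpecialLinearGroup (Fin 2) F, y₂ ∈ Lsub F ∧ y₂ ∈ 𝒞 ∧
      ∃ u z : SpecialLinearGroup (Fin 2) F,
        u ^ p = 1 ∧ u ≠ 1 ∧ z ∈ Subgroup.center (SpecialLinearGroup (Fin 2) F) ∧
        y₁ * y₂ = u * z := by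
  have h2 : (2 : F) ≠ 0 := two_ne_zero'' p hodd
  set a := y₁.1 0 1 with hadef
  have hy₁a : y₁ = up a := eq_up_of_mem hy₁U
  have hane : a ≠ 0 := by
    intro h0
    rw [h0, up_zero] at hy₁a
    rw [h𝒞] at hy₁
    exact one_not_conj p hg₀ (hy₁a ▸ hy₁)
  set b : F := -4 / a with hbdef
  have hab : a * b = -4 := by rw [hbdef]; field_simp; try ring
  have hdetu : Matrix.det !![(3 : F), -a; -b, -1] = 1 := by
    rw [Matrix.det_fin_two_of]; linear_combination -hab
  set u : SpecialLinearGroup (Fin 2) F := ⟨!![(3 : F), -a; -b, -1], hdetu⟩ with hudef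
  have hdetz : Matrix.det !![(-1 : F), 0; 0, -1] = 1 := by
    rw [Matrix.det_fin_two_of]; ring
  set z : SpecialLinearGroup (Fin 2) F := ⟨!![(-1 : F), 0; 0, -1], hdetz⟩ with hzdef
  have hzc : z ∈ Subgroup.center (SpecialLinearGroup (Fin 2) F) := by
    rw [Matrix.SpecialLinearGroup.mem_center_iff]
    refine ⟨-1, by norm_num, ?_⟩
    ext i j
    fin_cases i <;> fin_cases j <;>
      simp [hzdef, Matrix.scalar_apply, Matrix.diagonal_apply]
  have hup : u ^ p = 1 := by
    apply sl_pow_p_eq_one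
    rw [hudef, Matrix.trace_fin_two]
    norm_num
  have hune : u ≠ 1 := by
    intro hh
    apply hane
    have h3 := congrArg (fun y : SpecialLinearGroup (Fin 2) F => y.1 0 1) hh
    simp [hudef, Matrix.SpecialLinearGroup.coe_one, Matrix.one_apply] at h3
    exact h3
  have hmain : y₁ * lo b = u * z := by
    apply Subtype.ext
    rw [Matrix.SpecialLinearGroup.coe_mul, Matrix.SpecialLinearGroup.coe_mul, hy₁a]
    ext i j
    fin_cases i <;> fin_cases j <;>
      simp [hudef, hzdef, Matrix.mul_apply, Fin.sum_univ_two] <;>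
      linear_combination hab
  have hdetm : Matrix.det !![(0 : F), a / 2; -(2 / a), 0] = 1 := by
    rw [Matrix.det_fin_two_of]; field_simp; try ring
  set m : SpecialLinearGroup (Fin 2) F := ⟨!![(0 : F), a / 2; -(2 / a), 0], hdetm⟩ with hmdef
  have hsemi : m * y₁ = lo b * m := by
    apply Subtype.ext
    rw [Matrix.SpecialLinearGroup.coe_mul, Matrix.SpecialLinearGroup.coe_mul, hy₁a]
    ext i j
    fin_cases i <;> fin_cases j <;>
      simp [hmdef, hbdef, Matrix.mul_apply, Fin.sum_univ_two] <;>
      field_simp <;> try ring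
  have hconj : IsConj y₁ (lo b) := by
    rw [isConj_iff]
    exact ⟨m, by rw [hsemi, mul_inv_cancel_right]⟩
  have hy₁conj : IsConj g₀ y₁ := by rw [h𝒞] at hy₁; exact hy₁
  have hy₂C : lo b ∈ 𝒞 := by
    rw [h𝒞]
    exact hy₁conj.trans hconj
  refine ⟨lo b, ⟨lo_mem b, hy₂C, u, z, hup, hune, hzc, hmain⟩, ?_⟩
  rintro y' ⟨hyL, hyC, u', z', hu', hu'ne, hz', heq⟩
  set b' := y'.1 1 0 with hb'def
  have hy' : y' = lo b' := eq_lo_of_mem hyL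
  obtain ⟨r, hr2, hrz⟩ := Matrix.SpecialLinearGroup.mem_center_iff.mp hz'
  rw [Fintype.card_fin] at hr2
  have htru : (u' : Matrix (Fin 2) (Fin 2) F).trace = 2 := by
    apply trace_eq_two_of_pow p (k := 1)
    rw [pow_one]
    have h3 := congrArg (fun y : SpecialLinearGroup (Fin 2) F =>
      (y : Matrix (Fin 2) (Fin 2) F)) hu'
    simpa [Matrix.SpecialLinearGroup.coe_pow] using h3
  have htr_eq : (2 : F) + a * b' = r * 2 := by
    have h4 := congrArg (fun y : SpecialLinearGroup (Fin 2) F =>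
      (y : Matrix (Fin 2) (Fin 2) F).trace) heq
    have hL : ((y₁ * y' : SpecialLinearGroup (Fin 2) F) :
        Matrix (Fin 2) (Fin 2) F).trace = 2 + a * b' := by
      rw [Matrix.SpecialLinearGroup.coe_mul, hy₁a, hy', Matrix.trace_fin_two]
      simp [Matrix.mul_apply, Fin.sum_univ_two]
      ring
    have hR : ((u' * z' : SpecialLinearGroup (Fin 2) F) :
        Matrix (Fin 2) (Fin 2) F).trace = r * (u' : Matrix (Fin 2) (Fin 2) F).trace := by
      rw [Matrix.SpecialLinearGroup.coe_mul, ← hrz, Matrix.trace_fin_two, Matrix.trace_fin_two]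
      simp [Matrix.scalar_apply, Matrix.diagonal_apply, Matrix.mul_apply, Fin.sum_univ_two]
      ring
    rw [hL, hR, htru] at h4
    exact h4
  have hr1 : r = 1 ∨ r = -1 := by
    have h5 : (r - 1) * (r + 1) = 0 := by linear_combination hr2
    rcases mul_eq_zero.mp h5 with h6 | h6
    · left; linear_combination h6
    · right; linear_combination h6
  rcases hr1 with hr | hr
  · exfalso
    rw [hr] at htr_eq
    have hb'0 : b' = 0 := by
      have h7 : a * b' = 0 := by linear_combination htr_eq
      rcases mul_eq_zero.mp h7 with h8 | h8
      · exact absurd h8 hane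
      · exact h8
    rw [hb'0, lo_zero] at hy'
    rw [h𝒞] at hyC
    exact one_not_conj p hg₀ (hy' ▸ hyC)
  · rw [hr] at htr_eq
    have hbb : a * b' = a * b := by rw [hab]; linear_combination htr_eq
    have hb'b : b' = b := mul_left_cancel₀ hane hbb
    rw [hy', hb'b]

end Statement3Aux

open Statement3Aux in
/-- In `SL₂(F)` over a finite field of odd characteristic `p`, for a conjugacy
class `𝒞` of elements of order `p`, an element `y₁ ∈ 𝒞 ∩ S₁`, and a Sylow
`p`-subgroup `S₂ ≠ S₁`, there is a unique `y₂ ∈ S₂ ∩ 𝒞` such that `y₁ * y₂` is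
the product of a non-trivial unipotent element and a central element. -/
theorem statement3 {F : Type*} [Field F] [Fintype F] (p : ℕ) [Fact p.Prime]
    [CharP F p] (hodd : Odd p)
    (g₀ : Matrix.SpecialLinearGroup (Fin 2) F) (hg₀ : orderOf g₀ = p)
    (𝒞 : Set (Matrix.SpecialLinearGroup (Fin 2) F)) (h𝒞 : 𝒞 = {h | IsConj g₀ h})
    (y₁ : Matrix.SpecialLinearGroup (Fin 2) F) (hy₁ : y₁ ∈ 𝒞)
    (S₁ S₂ : Sylow p (Matrix.SpecialLinearGroup (Fin 2) F))
    (hS : S₁ ≠ S₂) (hy₁S : y₁ ∈ S₁) :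
    ∃! y₂ : Matrix.SpecialLinearGroup (Fin 2) F,
      y₂ ∈ S₂ ∧ y₂ ∈ 𝒞 ∧
      ∃ u z : Matrix.SpecialLinearGroup (Fin 2) F,
        u ^ p = 1 ∧ u ≠ 1 ∧ z ∈ Subgroup.center (Matrix.SpecialLinearGroup (Fin 2) F) ∧
        y₁ * y₂ = u * z := by
  classical
  haveI hfin : Finite (Matrix.SpecialLinearGroup (Fin 2) F) :=
    inferInstanceAs (Finite {A : Matrix (Fin 2) (Fin 2) F // A.det = 1})
  obtain ⟨g₁, hg₁⟩ :=
    MulAction.exists_smul_eq (Matrix.SpecialLinearGroup (Fin 2) F) S₁ (US F p)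
  obtain ⟨e, he⟩ :=
    MulAction.exists_smul_eq (Matrix.SpecialLinearGroup (Fin 2) F) (US F p) (g₁ • S₂)
  have he10 : e.1 1 0 ≠ 0 := by
    intro h0
    have h1 : (US F p : Sylow p _) = g₁ • S₂ := by rw [← smul_US_eq_US p h0, he]
    rw [← hg₁] at h1
    exact hS (MulAction.injective g₁ h1)
  set d : Matrix.SpecialLinearGroup (Fin 2) F := up (-(e.1 0 0) / e.1 1 0) with hddef
  have hd10 : d.1 1 0 = 0 := by simp [hddef]
  have hm00 : (d * e).1 0 0 = 0 := by
    rw [Matrix.SpecialLinearGroup.coe_mul, Matrix.mul_apply, Fin.sum_univ_two]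
    simp [hddef]
    field_simp
    ring
  set g := d * g₁ with hgdef
  have hgS₁ : g • S₁ = US F p := by
    rw [hgdef, mul_smul, hg₁, smul_US_eq_US p hd10]
  have hgS₂ : g • S₂ = LS F p := by
    rw [hgdef, mul_smul, ← he, ← mul_smul, smul_US_eq_LS p hm00]
  have hy₁'U : g * y₁ * g⁻¹ ∈ Usub F := by
    have h1 : g⁻¹ * (g * y₁ * g⁻¹) * g = y₁ := by group
    have h2 : g * y₁ * g⁻¹ ∈ g • S₁ := mem_smul_sylow.mpr (by rw [h1]; exact hy₁S)
    rw [hgS₁] at h2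
    exact h2
  have hy₁'C : g * y₁ * g⁻¹ ∈ 𝒞 := by
    rw [h𝒞] at hy₁ ⊢
    exact hy₁.trans (isConj_iff.mpr ⟨g, rfl⟩)
  obtain ⟨y₂', ⟨hL', hC', hdec'⟩, huniq'⟩ :=
    core p hodd g₀ hg₀ 𝒞 h𝒞 (g * y₁ * g⁻¹) hy₁'C hy₁'U
  refine ⟨g⁻¹ * y₂' * g, ⟨?_, ?_, ?_⟩, ?_⟩
  · have h2 : y₂' ∈ g • S₂ := by rw [hgS₂]; exact hL'
    exact mem_smul_sylow.mp h2
  · rw [h𝒞] at hC' ⊢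
    exact hC'.trans (isConj_iff.mpr ⟨g⁻¹, by rw [inv_inv]⟩)
  · have h3 := decomp_conj p g⁻¹ hdec'
    simp only [inv_inv] at h3
    have h4 : g⁻¹ * (g * y₁ * g⁻¹) * g = y₁ := by group
    rw [h4] at h3
    exact h3
  · rintro y ⟨hyS₂, hyC, hy_dec⟩
    have hY_L : g * y * g⁻¹ ∈ Lsub F := by
      have h1 : g⁻¹ * (g * y * g⁻¹) * g = y := by group
      have h2 : g * y * g⁻¹ ∈ g • S₂ := mem_smul_sylow.mpr (by rw [h1]; exact hyS₂)
      rw [hgS₂] at h2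
      exact h2
    have hY_C : g * y * g⁻¹ ∈ 𝒞 := by
      rw [h𝒞] at hyC ⊢
      exact hyC.trans (isConj_iff.mpr ⟨g, rfl⟩)
    have h5 := huniq' (g * y * g⁻¹) ⟨hY_L, hY_C, decomp_conj p g hy_dec⟩
    have h6 : y = g⁻¹ * (g * y * g⁻¹) * g := by group
    rw [h6, h5]
end

section
/- Let F be a finite field of odd characteristic p, G = SL₂(F), and let 𝒞 be a conjugacy class of elements of order p in G. Then the Killing graph 𝒢(G, 𝒞) is connected; equivalently, the Killing form K_𝒞 is irreducible. -/
open Matrix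

namespace KillingAux

variable {F : Type*} [Field F]

/-- upper unipotent -/
def Uu (t : F) : Matrix.SpecialLinearGroup (Fin 2) F :=
  ⟨!![1, t; 0, 1], by simp [Matrix.det_fin_two_of]⟩

@[simp] lemma Uu_coe (t : F) :
    ((Uu t : Matrix.SpecialLinearGroup (Fin 2) F) : Matrix (Fin 2) (Fin 2) F) = !![1, t; 0, 1] :=
  rfl

lemma Uu_mul (s t : F) : Uu s * Uu t = Uu (s + t) := by
  apply Subtype.ext
  rw [Matrix.SpecialLinearGroup.coe_mul, Uu_coe, Uu_coe, Uu_coe, Matrix.mul_fin_two]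
  norm_num [add_comm]

lemma Uu_commute (s t : F) : Commute (Uu s) (Uu t) := by
  unfold Commute SemiconjBy
  rw [Uu_mul, Uu_mul, add_comm]

lemma conj_entries (a b c d s : F) (h : a * d - b * c = 1) :
    !![a, b; c, d] * (!![1, s; 0, 1] * !![d, -b; -c, a]) =
      !![1 - s * a * c, s * a ^ 2; -(s * c ^ 2), 1 + s * a * c] := by
  rw [Matrix.mul_fin_two, Matrix.mul_fin_two]
  ext i j
  fin_cases i <;> fin_cases j <;> simp
  all_goals (try ring)
  all_goals linear_combination h

lemma conj_form (k : Matrix.SpecialLinearGroup (Fin 2) F) (s : F) {x y : F}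
    (hx : (k : Matrix (Fin 2) (Fin 2) F) 0 0 = x) (hy : (k : Matrix (Fin 2) (Fin 2) F) 1 0 = y) :
    ((k * Uu s * k⁻¹ : Matrix.SpecialLinearGroup (Fin 2) F) : Matrix (Fin 2) (Fin 2) F) =
      !![1 - s * x * y, s * x ^ 2; -(s * y ^ 2), 1 + s * x * y] := by
  have hdet : Matrix.det (k : Matrix (Fin 2) (Fin 2) F) = 1 := k.2
  rw [Matrix.det_fin_two] at hdet
  rw [Matrix.SpecialLinearGroup.coe_mul, Matrix.SpecialLinearGroup.coe_mul,
    Matrix.SpecialLinearGroup.coe_inv, Uu_coe, mul_assoc]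
  rw [Matrix.eta_fin_two (k : Matrix (Fin 2) (Fin 2) F), Matrix.adjugate_fin_two_of, hx, hy]
  rw [conj_entries _ _ _ _ _ (by rw [hx, hy] at hdet; linear_combination hdet)]


lemma sq_expand (A : Matrix (Fin 2) (Fin 2) F) :
    (A - 1) * (A - 1) = (Matrix.trace A - 2) • A + (1 - Matrix.det A) • (1 : Matrix (Fin 2) (Fin 2) F) := by
  rw [Matrix.eta_fin_two A]
  rw [Matrix.trace_fin_two_of, Matrix.det_fin_two_of, Matrix.one_fin_two]
  ext i j
  fin_cases i <;> fin_cases j <;>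
    simp [Matrix.mul_apply, Fin.sum_univ_two] <;> ring

lemma ordp (p : ℕ) [Fact p.Prime] [CharP F p] (g : Matrix.SpecialLinearGroup (Fin 2) F)
    (hgp : g ^ p = 1) :
    ((g : Matrix (Fin 2) (Fin 2) F) - 1) * ((g : Matrix (Fin 2) (Fin 2) F) - 1) = 0 := by
  set A := (g : Matrix (Fin 2) (Fin 2) F) with hA
  have hdetA : Matrix.det A = 1 := g.2
  have hAp : A ^ p = 1 := by
    rw [hA, ← Matrix.SpecialLinearGroup.coe_pow, hgp, Matrix.SpecialLinearGroup.coe_one]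
  have hB : (A - 1) ^ p = 0 := by
    rw [sub_pow_char_of_commute p (Commute.one_right A), hAp,
      one_pow, sub_self]
  have hpne : p ≠ 0 := (Fact.out : p.Prime).ne_zero
  have hdetB : Matrix.det (A - 1) = 0 := by
    have h0 : Matrix.det (A - 1) ^ p = 0 := by
      rw [← Matrix.det_pow, hB, Matrix.det_zero]
    exact pow_eq_zero_iff hpne |>.mp h0
  have e1 : (A - 1) * (A - 1) = (Matrix.trace A - 2) • A := by
    rw [sq_expand, hdetA, sub_self, zero_smul, add_zero]
  have e2 : (Matrix.trace A - 2) ^ 2 = 0 := by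
    have := congrArg Matrix.det e1
    rw [Matrix.det_mul, hdetB, Matrix.det_smul, hdetA, mul_zero] at this
    simpa using this.symm
  have htr : Matrix.trace A = 2 := by
    have h0 := pow_eq_zero_iff (n := 2) (by norm_num) |>.mp e2
    exact sub_eq_zero.mp h0
  rw [e1, htr, sub_self, zero_smul]

lemma unip (g : Matrix.SpecialLinearGroup (Fin 2) F) (hg : g ≠ 1)
    (h2 : ((g : Matrix (Fin 2) (Fin 2) F) - 1) * ((g : Matrix (Fin 2) (Fin 2) F) - 1) = 0) :
    ∃ (h : Matrix.SpecialLinearGroup (Fin 2) F) (t : F), t ≠ 0 ∧ g = h * Uu t * h⁻¹ := by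
  set A := (g : Matrix (Fin 2) (Fin 2) F) with hA
  have hdet : A 0 0 * A 1 1 - A 0 1 * A 1 0 = 1 := by
    have := g.2; rwa [Matrix.det_fin_two] at this
  have E00 : (A 0 0 - 1) * (A 0 0 - 1) + A 0 1 * A 1 0 = 0 := by
    have := congrFun (congrFun h2 0) 0
    simpa [Matrix.mul_apply, Fin.sum_univ_two, Matrix.sub_apply, Matrix.one_apply] using this
  have E01 : (A 0 0 - 1) * A 0 1 + A 0 1 * (A 1 1 - 1) = 0 := by
    have := congrFun (congrFun h2 0) 1
    simpa [Matrix.mul_apply, Fin.sum_univ_two, Matrix.sub_apply, Matrix.one_apply] using this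
  have E10 : (A 1 0) * (A 0 0 - 1) + (A 1 1 - 1) * (A 1 0) = 0 := by
    have := congrFun (congrFun h2 1) 0
    simpa [Matrix.mul_apply, Fin.sum_univ_two, Matrix.sub_apply, Matrix.one_apply] using this
  have E11 : A 1 0 * A 0 1 + (A 1 1 - 1) * (A 1 1 - 1) = 0 := by
    have := congrFun (congrFun h2 1) 1
    simpa [Matrix.mul_apply, Fin.sum_univ_two, Matrix.sub_apply, Matrix.one_apply] using this
  have htr : A 1 1 = 2 - A 0 0 := by
    by_cases hs : (A 0 0 - 1) + (A 1 1 - 1) = 0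
    · linear_combination hs
    · exfalso
      have hb : A 0 1 = 0 := by
        rcases mul_eq_zero.mp (show A 0 1 * ((A 0 0 - 1) + (A 1 1 - 1)) = 0 by
          linear_combination E01) with h | h
        · exact h
        · exact absurd h hs
      have hc : A 1 0 = 0 := by
        rcases mul_eq_zero.mp (show A 1 0 * ((A 0 0 - 1) + (A 1 1 - 1)) = 0 by
          linear_combination E10) with h | h
        · exact h
        · exact absurd h hs
      have ha : A 0 0 = 1 := by
        have : (A 0 0 - 1) * (A 0 0 - 1) = 0 := by rw [hb] at E00; linear_combination E00
        have := mul_self_eq_zero.mp this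
        linear_combination this
      have hd : A 1 1 = 1 := by
        have : (A 1 1 - 1) * (A 1 1 - 1) = 0 := by rw [hc] at E11; linear_combination E11
        have := mul_self_eq_zero.mp this
        linear_combination this
      rw [ha, hd] at hs
      simp at hs
  by_cases hc : A 1 0 = 0
  · -- g is upper triangular unipotent
    have ha1 : A 0 0 = 1 := by
      have : (A 0 0 - 1) * (A 0 0 - 1) = 0 := by rw [hc] at E00; linear_combination E00
      have := mul_self_eq_zero.mp this
      linear_combination this
    have hd1 : A 1 1 = 1 := by rw [htr, ha1]; ring
    have hb0 : A 0 1 ≠ 0 := by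
      intro hb
      apply hg
      apply Subtype.ext
      rw [Matrix.SpecialLinearGroup.coe_one, ← hA, Matrix.eta_fin_two A, ha1, hd1, hb, hc,
        Matrix.one_fin_two]
    refine ⟨1, A 0 1, hb0, ?_⟩
    rw [inv_one, one_mul, mul_one]
    apply Subtype.ext
    rw [Uu_coe, ← hA, Matrix.eta_fin_two A, ha1, hd1, hc]
    simp
  · refine ⟨⟨!![A 0 0 - 1, -(A 1 0)⁻¹; A 1 0, 0], by
      rw [Matrix.det_fin_two_of]; field_simp; ring⟩, -(A 1 0)⁻¹,
      neg_ne_zero.mpr (inv_ne_zero hc), ?_⟩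
    apply Subtype.ext
    rw [conj_form (k := ⟨!![A 0 0 - 1, -(A 1 0)⁻¹; A 1 0, 0], by
      rw [Matrix.det_fin_two_of]; field_simp; ring⟩) _ (x := A 0 0 - 1) (y := A 1 0) (by simp) (by simp), ← hA]
    rw [Matrix.eta_fin_two A]
    ext i j
    fin_cases i <;> fin_cases j <;> simp
    all_goals (try ring)
    all_goals (field_simp; try ring)
    all_goals
      first
        | linear_combination E00
        | linear_combination -E00
        | linear_combination htr
        | linear_combination -htr


lemma key_sq (s γ β : F) (hs : s ≠ 0) (hβ : β = 2 / s) :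
    (-(!![1 - s*γ*β, s - s^2*γ*β + s*γ^2; -(s*β^2), 1 + s*γ*β - s^2*β^2]) - 1) *
    (-(!![1 - s*γ*β, s - s^2*γ*β + s*γ^2; -(s*β^2), 1 + s*γ*β - s^2*β^2])
      - (1 : Matrix (Fin 2) (Fin 2) F)) = 0 := by
  subst hβ
  ext i j
  fin_cases i <;> fin_cases j <;>
    · simp [Matrix.mul_apply, Fin.sum_univ_two, Matrix.sub_apply, Matrix.one_apply,
        Matrix.neg_apply]
      field_simp
      ring

lemma key_comm (s x y γ β : F) (hy : y ≠ 0) (hs : s ≠ 0)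
    (hγ : γ = 2 * x / (s * y)) (hβ : β = 2 / s) :
    !![1 - s*x*y, s*x^2; -(s*y^2), 1 + s*x*y] * !![1 - s*γ*β, s*γ^2; -(s*β^2), 1 + s*γ*β] =
    !![1 - s*γ*β, s*γ^2; -(s*β^2), 1 + s*γ*β] * !![1 - s*x*y, s*x^2; -(s*y^2), 1 + s*x*y] := by
  subst hγ hβ
  ext i j
  fin_cases i <;> fin_cases j <;>
    · simp [Matrix.mul_apply, Fin.sum_univ_two]
      field_simp
      try ring


lemma conj_mul_conj (h : Matrix.SpecialLinearGroup (Fin 2) F) (q r : F) :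
    (h * Uu q * h⁻¹) * (h * Uu r * h⁻¹) = h * Uu (q + r) * h⁻¹ := by
  rw [← Uu_mul]
  group

lemma conj_comm (h : Matrix.SpecialLinearGroup (Fin 2) F) (q r : F) :
    Commute (h * Uu q * h⁻¹) (h * Uu r * h⁻¹) := by
  unfold Commute SemiconjBy
  rw [conj_mul_conj, conj_mul_conj, add_comm]

end KillingAux

lemma adj_of_witness {G : Type*} [Group G] {C : Set G} {a b : ↥C} (hne : a ≠ b)
    (c : G) (hc : c ∈ C) (h : Commute c ((a : G) * (b : G))) : (killingGraph C).Adj a b := by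
  simp only [killingGraph, SimpleGraph.fromRel_adj]
  exact ⟨hne, Or.inl ⟨c, hc, h⟩⟩

lemma adj_of_commute {G : Type*} [Group G] {C : Set G} {a b : ↥C} (hne : a ≠ b)
    (h : Commute (a : G) (b : G)) : (killingGraph C).Adj a b :=
  adj_of_witness hne a a.2 ((Commute.refl (a : G)).mul_right h)


/-- In `SL₂(F)` over a finite field of odd characteristic `p`, the Killing graph
of a conjugacy class of elements of order `p` is connected, i.e. the Killing form
is irreducible. -/
theorem statement4 {F : Type*} [Field F] [Fintype F] (p : ℕ) [Fact p.Prime]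
    [CharP F p] (hodd : Odd p)
    (g₀ : Matrix.SpecialLinearGroup (Fin 2) F) (hg₀ : orderOf g₀ = p) :
    (killingGraph {h : Matrix.SpecialLinearGroup (Fin 2) F | IsConj g₀ h}).Connected := by
  classical
  have hp : p.Prime := Fact.out
  have hp2 : (2 : F) ≠ 0 := by
    have hpne2 : p ≠ 2 := by rintro rfl; exact (Nat.not_odd_iff_even.mpr even_two) hodd
    intro h
    have h2 : ((2 : ℕ) : F) = 0 := by exact_mod_cast h
    exact hpne2 ((Nat.prime_dvd_prime_iff_eq hp Nat.prime_two).mp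
      ((CharP.cast_eq_zero_iff F p 2).mp h2))
  have hg1 : g₀ ≠ 1 := by
    intro h
    rw [h, orderOf_one] at hg₀
    exact hp.one_lt.ne hg₀
  have hsq := KillingAux.ordp p g₀ (by rw [← hg₀]; exact pow_orderOf_eq_one g₀)
  obtain ⟨h₀, s, hs0, hgu⟩ := KillingAux.unip g₀ hg1 hsq
  set C : Set (Matrix.SpecialLinearGroup (Fin 2) F) := {h | IsConj g₀ h} with hC
  obtain ⟨u, hudef⟩ : ∃ u, u = KillingAux.Uu s := ⟨_, rfl⟩
  have huC : u ∈ C := by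
    rw [hudef]
    exact (isConj_iff.mpr ⟨h₀, hgu.symm⟩).symm
  rw [SimpleGraph.connected_iff_exists_forall_reachable]
  refine ⟨⟨u, huC⟩, fun a => SimpleGraph.Reachable.symm ?_⟩
  obtain ⟨k, hk⟩ := isConj_iff.mp ((IsConj.symm huC).trans a.2)
  obtain ⟨x, hx⟩ : ∃ x, x = (k : Matrix (Fin 2) (Fin 2) F) 0 0 := ⟨_, rfl⟩
  obtain ⟨y, hy⟩ : ∃ y, y = (k : Matrix (Fin 2) (Fin 2) F) 1 0 := ⟨_, rfl⟩
  have ha : ((a : Matrix.SpecialLinearGroup (Fin 2) F) : Matrix (Fin 2) (Fin 2) F) =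
      !![1 - s*x*y, s*x^2; -(s*y^2), 1 + s*x*y] := by
    rw [← hk, hudef]
    exact KillingAux.conj_form k s hx.symm hy.symm
  by_cases hy0 : y = 0
  · have haU : (a : Matrix.SpecialLinearGroup (Fin 2) F) = KillingAux.Uu (s * x^2) := by
      apply Subtype.ext
      rw [ha, KillingAux.Uu_coe, hy0]
      norm_num
    by_cases hau : a = ⟨u, huC⟩
    · rw [hau]
    · refine (adj_of_commute hau ?_).reachable
      have : ((⟨u, huC⟩ : ↥C) : Matrix.SpecialLinearGroup (Fin 2) F) = KillingAux.Uu s := hudef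
      rw [haU, this]
      exact KillingAux.Uu_commute _ _
  · have hsy : s * y ≠ 0 := mul_ne_zero hs0 hy0
    obtain ⟨γ, hγ⟩ : ∃ γ : F, γ = 2 * x / (s * y) := ⟨_, rfl⟩
    obtain ⟨β, hβ⟩ : ∃ β : F, β = 2 / s := ⟨_, rfl⟩
    have hβ0 : β ≠ 0 := by rw [hβ]; exact div_ne_zero hp2 hs0
    have hsβ : s * β = 2 := by rw [hβ]; field_simp
    obtain ⟨kb, hkb⟩ : ∃ kb : Matrix.SpecialLinearGroup (Fin 2) F,
        kb = ⟨!![γ, -β⁻¹; β, 0], by rw [Matrix.det_fin_two_of]; field_simp; ring⟩ := ⟨_, rfl⟩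
    obtain ⟨b, hbdef⟩ : ∃ b, b = kb * u * kb⁻¹ := ⟨_, rfl⟩
    have hbC : b ∈ C := by
      rw [hbdef]
      exact IsConj.trans huC (isConj_iff.mpr ⟨kb, rfl⟩)
    have hb : ((b : Matrix.SpecialLinearGroup (Fin 2) F) : Matrix (Fin 2) (Fin 2) F) =
        !![1 - s*γ*β, s*γ^2; -(s*β^2), 1 + s*γ*β] := by
      rw [hbdef, hudef]
      exact KillingAux.conj_form kb s (by rw [hkb]; rfl) (by rw [hkb]; rfl)
    have hab : Commute (a : Matrix.SpecialLinearGroup (Fin 2) F) b := by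
      unfold Commute SemiconjBy
      apply Subtype.ext
      rw [Matrix.SpecialLinearGroup.coe_mul, Matrix.SpecialLinearGroup.coe_mul, ha, hb]
      exact KillingAux.key_comm s x y γ β hy0 hs0 hγ hβ
    obtain ⟨m, hmdef⟩ : ∃ m, m = b * u := ⟨_, rfl⟩
    have hmcoe : ((m : Matrix.SpecialLinearGroup (Fin 2) F) : Matrix (Fin 2) (Fin 2) F) =
        !![1 - s*γ*β, s - s^2*γ*β + s*γ^2; -(s*β^2), 1 + s*γ*β - s^2*β^2] := by
      rw [hmdef, Matrix.SpecialLinearGroup.coe_mul, hb, hudef, KillingAux.Uu_coe,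
        Matrix.mul_fin_two]
      ext i j
      fin_cases i <;> fin_cases j <;> simp <;> ring
    obtain ⟨mm, hmmdef⟩ : ∃ mm : Matrix.SpecialLinearGroup (Fin 2) F,
        mm = ⟨-((m : Matrix.SpecialLinearGroup (Fin 2) F) : Matrix (Fin 2) (Fin 2) F), by
          rw [Matrix.det_neg]
          simp [m.2]⟩ := ⟨_, rfl⟩
    have hmmcoe : ((mm : Matrix.SpecialLinearGroup (Fin 2) F) : Matrix (Fin 2) (Fin 2) F) =
        -((m : Matrix.SpecialLinearGroup (Fin 2) F) : Matrix (Fin 2) (Fin 2) F) := by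
      rw [hmmdef]
    have hmm1 : mm ≠ 1 := by
      intro h
      have h10 := congrArg (fun z : Matrix.SpecialLinearGroup (Fin 2) F =>
        ((z : Matrix (Fin 2) (Fin 2) F)) 1 0) h
      simp only [Matrix.SpecialLinearGroup.coe_one] at h10
      rw [hmmcoe, hmcoe] at h10
      simp at h10
      rcases h10 with h10 | h10
      · exact hs0 h10
      · exact hβ0 h10
    have hmmsq : ((mm : Matrix (Fin 2) (Fin 2) F) - 1) * ((mm : Matrix (Fin 2) (Fin 2) F) - 1)
        = 0 := by
      rw [hmmcoe, hmcoe]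
      exact KillingAux.key_sq s γ β hs0 hβ
    obtain ⟨k2, t, ht0, hmeq⟩ := KillingAux.unip mm hmm1 hmmsq
    obtain ⟨c, hcdef⟩ : ∃ c, c = k2 * u * k2⁻¹ := ⟨_, rfl⟩
    have hcC : c ∈ C := by
      rw [hcdef]
      exact IsConj.trans huC (isConj_iff.mpr ⟨k2, rfl⟩)
    have hcmm : c * mm = mm * c := by
      rw [hmeq, hcdef, hudef]
      exact KillingAux.conj_comm k2 s t
    have hcm : Commute c m := by
      have e1 := congrArg (fun z : Matrix.SpecialLinearGroup (Fin 2) F =>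
        (z : Matrix (Fin 2) (Fin 2) F)) hcmm
      simp only [Matrix.SpecialLinearGroup.coe_mul] at e1
      rw [hmmcoe, mul_neg, neg_mul, neg_inj] at e1
      unfold Commute SemiconjBy
      apply Subtype.ext
      rw [Matrix.SpecialLinearGroup.coe_mul, Matrix.SpecialLinearGroup.coe_mul]
      exact e1
    have hbne : (⟨b, hbC⟩ : ↥C) ≠ ⟨u, huC⟩ := by
      intro h
      have h10 := congrArg (fun z : ↥C => ((z : Matrix.SpecialLinearGroup (Fin 2) F) :
        Matrix (Fin 2) (Fin 2) F) 1 0) h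
      simp only at h10
      rw [hb, hudef, KillingAux.Uu_coe] at h10
      simp at h10
      rcases h10 with h10 | h10
      · exact hs0 h10
      · exact hβ0 h10
    have hadj2 : (killingGraph C).Adj ⟨b, hbC⟩ ⟨u, huC⟩ := by
      refine adj_of_witness hbne c hcC ?_
      have : ((⟨b, hbC⟩ : ↥C) : Matrix.SpecialLinearGroup (Fin 2) F) *
          ((⟨u, huC⟩ : ↥C) : Matrix.SpecialLinearGroup (Fin 2) F) = m := by
        rw [hmdef]
      rw [this]
      exact hcm
    by_cases hab' : a = ⟨b, hbC⟩
    · rw [hab']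
      exact hadj2.reachable
    · exact ((adj_of_commute hab' hab).reachable).trans hadj2.reachable
end

section
/- Let F be a finite field of odd characteristic p, G = GL₂(F), and let 𝒞 be a conjugacy class of elements of order p in G. Then the Killing graph 𝒢(G, 𝒞) is connected; equivalently, the Killing form K_𝒞 is irreducible. -/
namespace Stmt5Aux
open Matrix
variable {F : Type*} [Field F]

local notation "M2" => Matrix (Fin 2) (Fin 2) F

/-- 2×2 Cayley–Hamilton. -/
lemma ch2 (M : M2) : M * M = M.trace • M - M.det • (1 : M2) := by
  ext i j
  fin_cases i <;> fin_cases j <;>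
    simp [Matrix.mul_apply, Fin.sum_univ_two, Matrix.trace_fin_two, Matrix.det_fin_two,
      Matrix.one_apply, Matrix.smul_apply] <;> ring

lemma det_eq_zero_of_sq (N : M2) (h2 : N * N = 0) : N.det = 0 := by
  have : N.det * N.det = 0 := by rw [← Matrix.det_mul, h2, Matrix.det_zero]
  exact mul_self_eq_zero.mp this

lemma trace_eq_zero_of_sq (N : M2) (h2 : N * N = 0) (hN : N ≠ 0) : N.trace = 0 := by
  have hd := det_eq_zero_of_sq N h2
  have := ch2 N
  rw [h2, hd, zero_smul, sub_zero] at this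
  rcases smul_eq_zero.mp this.symm with h | h
  · exact h
  · exact absurd h hN

/-- linear dependence from vanishing 2×2 determinant -/
lemma dep (x y : Fin 2 → F) (hx : x ≠ 0) (h : x 0 * y 1 - x 1 * y 0 = 0) :
    ∃ c : F, y = c • x := by
  have hx' : x 0 ≠ 0 ∨ x 1 ≠ 0 := by
    by_contra hc
    push_neg at hc
    exact hx (funext fun i => by fin_cases i <;> simp [hc.1, hc.2])
  rcases hx' with h0 | h1
  · refine ⟨y 0 / x 0, funext fun i => ?_⟩
    fin_cases i
    · simp [div_mul_cancel₀, h0]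
    · have : y 1 = y 0 / x 0 * x 1 := by
        rw [div_mul_eq_mul_div, eq_div_iff h0]; linear_combination h
      simpa using this
  · refine ⟨y 1 / x 1, funext fun i => ?_⟩
    fin_cases i
    · have : y 0 = y 1 / x 1 * x 0 := by
        rw [div_mul_eq_mul_div, eq_div_iff h1]; linear_combination -h
      simpa using this
    · simp [div_mul_cancel₀, h1]

/-- the standard 2×2 nilpotent -/
def Ee (F : Type*) [Field F] : Matrix (Fin 2) (Fin 2) F := !![0,1;0,0]

lemma conj_to_E (N : M2) (hN : N ≠ 0) (h2 : N * N = 0) :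
    ∃ P : M2ˣ, N * P.val = P.val * Ee F := by
  obtain ⟨i, j, hij⟩ : ∃ i j, N i j ≠ 0 := by
    by_contra hc
    push_neg at hc
    exact hN (Matrix.ext fun i j => by simpa using hc i j)
  set v : Fin 2 → F := Pi.single j 1 with hv
  set x : Fin 2 → F := N.mulVec v with hxdef
  have hx : ∀ i, x i = N i j := fun i => by
    fin_cases j <;>
      simp [hxdef, hv, Matrix.mulVec, dotProduct, Pi.single_apply, Fin.sum_univ_two]
  have hxne : x ≠ 0 := fun hc => hij (by rw [← hx i, hc]; rfl)
  have hNx : N.mulVec x = 0 := by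
    rw [hxdef, Matrix.mulVec_mulVec, h2, Matrix.zero_mulVec]
  set P : M2 := !![x 0, v 0; x 1, v 1] with hP
  have hdet : P.det ≠ 0 := by
    intro hd
    rw [hP, Matrix.det_fin_two_of] at hd
    obtain ⟨c, hc⟩ := dep x v hxne (by linear_combination hd)
    apply hxne
    rw [hxdef, hc, Matrix.mulVec_smul, hNx, smul_zero]
  have key : ∀ i, N i 0 * x 0 + N i 1 * x 1 = 0 := fun i => by
    have := congrFun hNx i
    simpa [Matrix.mulVec, dotProduct, Fin.sum_univ_two] using this
  have hvx : ∀ i, N i 0 * v 0 + N i 1 * v 1 = x i := fun i => by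
    fin_cases i <;> simp [hxdef, Matrix.mulVec, dotProduct, Fin.sum_univ_two]
  have hcomm : N * P = P * Ee F := by
    ext i k
    fin_cases i <;> fin_cases k <;>
      simp [hP, Ee, Matrix.mul_apply, Fin.sum_univ_two] <;>
      first
        | simpa using key 0
        | simpa using key 1
        | simpa using hvx 0
        | simpa using hvx 1
  have hu : IsUnit P := (Matrix.isUnit_iff_isUnit_det _).mpr hdet.isUnit
  exact ⟨hu.unit, by rw [IsUnit.unit_spec]; exact hcomm⟩

lemma ne_one_iff (g : GL (Fin 2) F) : g ≠ 1 ↔ (g.val - 1 : M2) ≠ 0 := by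
  rw [sub_ne_zero]
  constructor
  · exact fun h hc => h (Units.ext hc)
  · exact fun h hc => h (by rw [hc]; rfl)

lemma semiconj_inv (A B Q Qi : M2) (hQ : Q * Qi = 1) (hQi : Qi * Q = 1)
    (h : A * Q = Q * B) : Qi * A = B * Qi := by
  calc Qi * A = Qi * A * (Q * Qi) := by rw [hQ, mul_one]
    _ = Qi * (A * Q) * Qi := by simp only [mul_assoc]
    _ = Qi * (Q * B) * Qi := by rw [h]
    _ = (Qi * Q) * (B * Qi) := by simp only [mul_assoc]
    _ = B * Qi := by rw [hQi, one_mul]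

lemma unipotent_isConj {g h : GL (Fin 2) F}
    (hg2 : (g.val - 1) * (g.val - 1) = 0) (hg1 : g ≠ 1)
    (hh2 : (h.val - 1) * (h.val - 1) = 0) (hh1 : h ≠ 1) : IsConj g h := by
  obtain ⟨P₀, hP₀⟩ := conj_to_E (g.val - 1) ((ne_one_iff g).mp hg1) hg2
  obtain ⟨P, hP⟩ := conj_to_E (h.val - 1) ((ne_one_iff h).mp hh1) hh2
  have h1 : (P₀⁻¹).val * (g.val - 1) = Ee F * (P₀⁻¹).val :=
    semiconj_inv _ _ _ _ (Units.mul_inv P₀) (Units.inv_mul P₀) hP₀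
  rw [isConj_iff]
  refine ⟨P * P₀⁻¹, ?_⟩
  rw [mul_inv_eq_iff_eq_mul]
  have hcN : (P.val * (P₀⁻¹).val) * (g.val - 1) = (h.val - 1) * (P.val * (P₀⁻¹).val) := by
    calc (P.val * (P₀⁻¹).val) * (g.val - 1) = P.val * ((P₀⁻¹).val * (g.val - 1)) := by
          rw [mul_assoc]
      _ = P.val * (Ee F * (P₀⁻¹).val) := by rw [h1]
      _ = ((h.val - 1) * P.val) * (P₀⁻¹).val := by rw [← mul_assoc, hP]
      _ = (h.val - 1) * (P.val * (P₀⁻¹).val) := by rw [mul_assoc]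
  apply Units.ext
  show ((P * P₀⁻¹) * g).val = (h * (P * P₀⁻¹)).val
  simp only [Units.val_mul]
  have e1 : (g.val : M2) = (g.val - 1) + 1 := by abel
  have e2 : (h.val : M2) = (h.val - 1) + 1 := by abel
  rw [e1, e2, mul_add, add_mul, hcN, mul_one, one_mul]

lemma conj_sub_one (Cv Ci G : M2) (hC : Cv * Ci = 1) :
    Cv * G * Ci - 1 = Cv * (G - 1) * Ci := by
  rw [mul_sub, mul_one, sub_mul, hC]

lemma conj_sq_zero (Cv Ci A : M2) (hC : Ci * Cv = 1) (hA : A * A = 0) :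
    (Cv * A * Ci) * (Cv * A * Ci) = 0 := by
  calc (Cv * A * Ci) * (Cv * A * Ci)
      = Cv * (A * ((Ci * Cv) * (A * Ci))) := by simp only [mul_assoc]
    _ = Cv * ((A * A) * Ci) := by rw [hC, one_mul]; simp only [mul_assoc]
    _ = 0 := by rw [hA, zero_mul, mul_zero]

lemma mem_iff {g₀ : GL (Fin 2) F}
    (hu2 : (g₀.val - 1) * (g₀.val - 1) = 0) (hu1 : g₀ ≠ 1) (h : GL (Fin 2) F) :
    IsConj g₀ h ↔ ((h.val - 1) * (h.val - 1) = 0 ∧ h ≠ 1) := by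
  constructor
  · intro hconj
    obtain ⟨c, hc⟩ := isConj_iff.mp hconj
    constructor
    · have hval : (h.val : M2) = c.val * g₀.val * (c⁻¹).val := by
        rw [← hc]; simp only [Units.val_mul]
      rw [hval, conj_sub_one _ _ _ (Units.mul_inv c)]
      exact conj_sq_zero _ _ _ (Units.inv_mul c) hu2
    · intro h1
      apply hu1
      calc g₀ = c⁻¹ * (c * g₀ * c⁻¹) * c := by group
        _ = 1 := by rw [hc, h1]; group
  · rintro ⟨h2, h1⟩
    exact unipotent_isConj hu2 hu1 h2 h1

lemma order_p_unipotent (p : ℕ) [Fact p.Prime] [CharP F p] (g : GL (Fin 2) F)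
    (hg : orderOf g = p) : (g.val - 1) * (g.val - 1) = 0 ∧ g ≠ 1 := by
  have hp : p.Prime := Fact.out
  have hg1 : g ≠ 1 := by
    intro h
    rw [h, orderOf_one] at hg
    exact hp.one_lt.ne hg
  refine ⟨?_, hg1⟩
  have hpow : (g.val : M2) ^ p = 1 := by
    have h1 : g ^ p = 1 := by rw [← hg]; exact pow_orderOf_eq_one g
    calc (g.val : M2) ^ p = ((g ^ p : GL (Fin 2) F) : M2) := by
          rw [Units.val_pow_eq_pow_val]
      _ = 1 := by rw [h1]; rfl
  set N : M2 := g.val - 1 with hN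
  have hNp : N ^ p = 0 := by
    haveI : CharP M2 p := Matrix.charP p
    rw [hN, sub_pow_char_of_commute p (Commute.one_right _), hpow, one_pow, sub_self]
  have hN0 : N ≠ 0 := (ne_one_iff g).mp hg1
  have hd : N.det = 0 := by
    have : N.det ^ p = 0 := by rw [← Matrix.det_pow, hNp, Matrix.det_zero]
    exact pow_eq_zero_iff hp.ne_zero |>.mp this
  have hch : N * N = N.trace • N := by
    have := ch2 N; rw [hd, zero_smul, sub_zero] at this; exact this
  have hNk : ∀ k : ℕ, N ^ (k + 1) = N.trace ^ k • N := by
    intro k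
    induction k with
    | zero => simp
    | succ k ih =>
      rw [pow_succ, ih, smul_mul_assoc, hch, smul_smul, pow_succ]
  have ht : N.trace = 0 := by
    have h2 : N.trace ^ (p - 1) • N = 0 := by
      rw [← hNk, Nat.sub_add_cancel hp.one_lt.le, hNp]
    rcases smul_eq_zero.mp h2 with h | h
    · exact pow_eq_zero_iff (Nat.sub_ne_zero_of_lt hp.one_lt) |>.mp h
    · exact absurd h hN0
  rw [hch, ht, zero_smul]

lemma det_one_add (N : M2) (ht : N.trace = 0) (hd : N.det = 0) : (1 + N).det = 1 := by
  rw [Matrix.trace_fin_two] at ht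
  rw [Matrix.det_fin_two] at hd ⊢
  simp only [Matrix.add_apply, Matrix.one_apply_eq, Matrix.one_apply_ne (by decide : (0:Fin 2) ≠ 1),
    Matrix.one_apply_ne (by decide : (1:Fin 2) ≠ 0), zero_add]
  linear_combination ht + hd

lemma trace_unip_mul (Na Nb : M2) (ha : Na.trace = 0) (hb : Nb.trace = 0) :
    ((1 + Na) * (1 + Nb)).trace = 2 + (Na * Nb).trace := by
  have : (1 + Na) * (1 + Nb) = 1 + Na + Nb + Na * Nb := by
    noncomm_ring
  rw [this]
  simp only [Matrix.trace_add, ha, hb, Matrix.trace_one]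
  norm_num

/-- the unit `1 + N` for square-zero `N` -/
def unipUnit (N : M2) (h2 : N * N = 0) : GL (Fin 2) F :=
  ⟨1 + N, 1 - N,
    by rw [show (1 + N) * (1 - N) = 1 - N * N from by noncomm_ring, h2, sub_zero],
    by rw [show (1 - N) * (1 + N) = 1 - N * N from by noncomm_ring, h2, sub_zero]⟩

lemma adj_of_trace (g₀ : GL (Fin 2) F)
    (hu2 : (g₀.val - 1) * (g₀.val - 1) = 0) (hu1 : g₀ ≠ 1)
    (a b : {h : GL (Fin 2) F | IsConj g₀ h})
    (hab : a ≠ b)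
    (ht : ((a.val.val - 1) * (b.val.val - 1)).trace = 0 ∨
          ((a.val.val - 1) * (b.val.val - 1)).trace = -4) :
    (killingGraph {h : GL (Fin 2) F | IsConj g₀ h}).Adj a b := by
  have hmem := fun h => mem_iff hu2 hu1 h
  obtain ⟨ha2, ha1⟩ := (hmem a.val).mp a.2
  obtain ⟨hb2, hb1⟩ := (hmem b.val).mp b.2
  set Na : M2 := a.val.val - 1 with hNa
  set Nb : M2 := b.val.val - 1 with hNb
  have hNa0 : Na ≠ 0 := (ne_one_iff _).mp ha1
  have hNb0 : Nb ≠ 0 := (ne_one_iff _).mp hb1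
  have ea : (a.val.val : M2) = 1 + Na := by rw [hNa]; abel
  have eb : (b.val.val : M2) = 1 + Nb := by rw [hNb]; abel
  set W : M2 := a.val.val * b.val.val with hW
  have hdetW : W.det = 1 := by
    rw [hW, Matrix.det_mul, ea, eb,
      det_one_add Na (trace_eq_zero_of_sq Na ha2 hNa0) (det_eq_zero_of_sq Na ha2),
      det_one_add Nb (trace_eq_zero_of_sq Nb hb2 hNb0) (det_eq_zero_of_sq Nb hb2), one_mul]
  have htrW : W.trace = 2 + (Na * Nb).trace := by
    rw [hW, ea, eb]
    exact trace_unip_mul Na Nb (trace_eq_zero_of_sq Na ha2 hNa0)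
      (trace_eq_zero_of_sq Nb hb2 hNb0)
  have hCH : W * W = W.trace • W - 1 := by
    have := ch2 W; rwa [hdetW, one_smul] at this
  have hWval : ((a.val * b.val : GL (Fin 2) F) : M2) = W := rfl
  rw [killingGraph, SimpleGraph.fromRel_adj]
  refine ⟨hab, Or.inl ?_⟩
  rcases ht with h0 | h4
  · -- trace 2 case
    rw [h0, add_zero] at htrW
    have hsq : (W - 1) * (W - 1) = 0 := by
      have e : (W - 1) * (W - 1) = W * W - (W + W) + 1 := by noncomm_ring
      rw [e, hCH, htrW, two_smul]
      abel
    by_cases hW1 : a.val * b.val = (1 : GL (Fin 2) F)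
    · exact ⟨g₀, IsConj.refl g₀, by rw [hW1]; exact Commute.one_right g₀⟩
    · refine ⟨a.val * b.val, ?_, Commute.refl _⟩
      refine (hmem _).mpr ⟨?_, hW1⟩
      show (((a.val * b.val : GL (Fin 2) F) : M2) - 1) * _ = 0
      rw [hWval]
      exact hsq
  · -- trace -2 case
    rw [h4] at htrW
    have htrW' : W.trace = -2 := by rw [htrW]; norm_num
    have hsq : (W + 1) * (W + 1) = 0 := by
      have e : (W + 1) * (W + 1) = W * W + (W + W) + 1 := by noncomm_ring
      have e2 : ((-2 : F)) • W = -(W + W) := by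
        rw [show ((-2 : F)) = -(2 : F) from by norm_num, neg_smul, two_smul]
      rw [e, hCH, htrW', e2]
      abel
    by_cases hW1 : W = -1
    · refine ⟨g₀, IsConj.refl g₀, ?_⟩
      apply Units.ext
      show (g₀.val : M2) * ((a.val * b.val : GL (Fin 2) F) : M2)
          = ((a.val * b.val : GL (Fin 2) F) : M2) * g₀.val
      rw [hWval, hW1]
      simp
    · refine ⟨-(a.val * b.val), ?_, (Commute.refl (a.val * b.val)).neg_left⟩
      refine (hmem _).mpr ⟨?_, ?_⟩
      · show (((-(a.val * b.val) : GL (Fin 2) F) : M2) - 1) * _ = 0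
        have hneg : ((-(a.val * b.val) : GL (Fin 2) F) : M2) = -W := by
          rw [Units.val_neg, hWval]
        rw [hneg, show (-W - 1 : M2) = -(W + 1) from by abel, neg_mul_neg]
        exact hsq
      · intro hc
        apply hW1
        have := congrArg (Units.val) hc
        rw [Units.val_neg, hWval, Units.val_one] at this
        exact neg_eq_iff_eq_neg.mp this
end Stmt5Aux

open Stmt5Aux in
/-- In `GL₂(F)` over a finite field of odd characteristic `p`, the Killing graph
of a conjugacy class of elements of order `p` is connected, i.e. the Killing form
is irreducible. -/
theorem statement5 {F : Type*} [Field F] [Fintype F] (p : ℕ) [Fact p.Prime]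
    [CharP F p] (hodd : Odd p)
    (g₀ : Matrix.GeneralLinearGroup (Fin 2) F) (hg₀ : orderOf g₀ = p) :
    (killingGraph {h : Matrix.GeneralLinearGroup (Fin 2) F | IsConj g₀ h}).Connected := by
  classical
  obtain ⟨hu2, hu1⟩ := order_p_unipotent p g₀ hg₀
  have hmem := fun h => mem_iff hu2 hu1 h
  rw [SimpleGraph.connected_iff]
  constructor
  · intro a b
    by_cases hab : a = b
    · rw [hab]
    obtain ⟨ha2, ha1⟩ := (hmem a.val).mp a.2
    obtain ⟨hb2, hb1⟩ := (hmem b.val).mp b.2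
    set Na : Matrix (Fin 2) (Fin 2) F := a.val.val - 1 with hNa
    set Nb : Matrix (Fin 2) (Fin 2) F := b.val.val - 1 with hNb
    have hNa0 : Na ≠ 0 := (ne_one_iff _).mp ha1
    have hNb0 : Nb ≠ 0 := (ne_one_iff _).mp hb1
    set c : F := (Na * Nb).trace with hc
    by_cases hcc : c = 0 ∨ c = -4
    · exact (adj_of_trace g₀ hu2 hu1 a b hab hcc).reachable
    · push_neg at hcc
      obtain ⟨hc0, hc4⟩ := hcc
      have hp : p.Prime := Fact.out
      have h2ne : (2 : F) ≠ 0 := by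
        intro h2
        have hdvd : p ∣ 2 := (CharP.cast_eq_zero_iff F p 2).mp (by exact_mod_cast h2)
        have hp2 : p = 2 := (Nat.prime_dvd_prime_iff_eq hp Nat.prime_two).mp hdvd
        rw [hp2] at hodd
        simp [Nat.odd_iff] at hodd
      have h4ne : (4 : F) ≠ 0 := by
        rw [show (4 : F) = 2 * 2 from by norm_num]
        exact mul_ne_zero h2ne h2ne
      set l : F := -4 / c with hl
      have hl0 : l ≠ 0 := div_ne_zero (neg_ne_zero.mpr h4ne) hc0
      have hlsq : (l • Na) * (l • Na) = 0 := by
        rw [smul_mul_assoc, mul_smul_comm, ha2, smul_zero, smul_zero]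
      set m : Matrix.GeneralLinearGroup (Fin 2) F := unipUnit (l • Na) hlsq with hm
      have hmval : (m.val : Matrix (Fin 2) (Fin 2) F) = 1 + l • Na := rfl
      have hmsub : (m.val : Matrix (Fin 2) (Fin 2) F) - 1 = l • Na := by
        rw [hmval]; abel
      have hmC : m ∈ {h : Matrix.GeneralLinearGroup (Fin 2) F | IsConj g₀ h} := by
        refine (hmem m).mpr ⟨?_, ?_⟩
        · rw [hmsub]; exact hlsq
        · rw [ne_one_iff, hmsub]
          exact smul_ne_zero hl0 hNa0
      set M : {h : Matrix.GeneralLinearGroup (Fin 2) F | IsConj g₀ h} := ⟨m, hmC⟩ with hM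
      have e1 : (killingGraph {h : Matrix.GeneralLinearGroup (Fin 2) F | IsConj g₀ h}).Adj a M := by
        apply adj_of_trace g₀ hu2 hu1 a M
        · intro h
          have hvv : a.val.val = m.val := by rw [h]
          have hNaeq : Na = l • Na := by
            conv_lhs => rw [hNa, hvv]
            exact hmsub
          have : (1 - l) • Na = 0 := by
            rw [sub_smul, one_smul, ← hNaeq, sub_self]
          rcases smul_eq_zero.mp this with h' | h'
          · have hl1 : l = 1 := by linear_combination -h'
            apply hc4
            rw [hl, div_eq_one_iff_eq hc0] at hl1
            exact hl1.symm
          · exact hNa0 h'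
        · left
          show (Na * (M.val.val - 1)).trace = 0
          have : M.val.val - 1 = l • Na := hmsub
          rw [this, mul_smul_comm, ha2, smul_zero, Matrix.trace_zero]
      have e2 : (killingGraph {h : Matrix.GeneralLinearGroup (Fin 2) F | IsConj g₀ h}).Adj M b := by
        apply adj_of_trace g₀ hu2 hu1 M b
        · intro h
          have hvv : m.val = b.val.val := by rw [← h]
          have hNbeq : Nb = l • Na := by rw [hNb, ← hvv]; exact hmsub
          apply hc0
          rw [hc, hNbeq, mul_smul_comm, ha2, smul_zero, Matrix.trace_zero]
        · right
          show ((M.val.val - 1) * Nb).trace = -4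
          rw [show M.val.val - 1 = l • Na from hmsub, smul_mul_assoc, Matrix.trace_smul,
            smul_eq_mul, ← hc, hl, div_mul_cancel₀ _ hc0]
      exact e1.reachable.trans e2.reachable
  · exact ⟨⟨g₀, IsConj.refl g₀⟩⟩
end

section
/- Let F be a finite field of odd characteristic p, let PSL₂(F) denote the quotient of SL₂(F) by its center, and let 𝒞 be a conjugacy class of elements of order p in PSL₂(F). Then the Killing graph 𝒢(PSL₂(F), 𝒞) is connected; equivalently, the Killing form K_𝒞 is irreducible. -/
section KillingAux
open Matrix

variable {F : Type*} [Field F]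
abbrev SL2 (F : Type*) [Field F] := Matrix.SpecialLinearGroup (Fin 2) F
def Qm (x y : F) : Matrix (Fin 2) (Fin 2) F := !![-(x*y), x^2; -(y^2), x*y]
lemma Qm_mul_Qm (x y z w : F) :
    Qm x y * Qm z w = (x*w - y*z) • !![-(x*w), x*z; -(y*w), y*z] := by
  ext i j
  fin_cases i <;> fin_cases j <;>
    simp [Qm, Matrix.mul_apply, Fin.sum_univ_succ] <;> ring
lemma det_one_add_smul_Qm (s x y : F) : det (1 + s • Qm x y) = 1 := by
  simp [Qm, Matrix.one_fin_two, det_fin_two]; ring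
def uQ (s x y : F) : SL2 F := ⟨1 + s • Qm x y, det_one_add_smul_Qm s x y⟩
lemma uQ_coe (s x y : F) : (uQ s x y : Matrix (Fin 2) (Fin 2) F) = 1 + s • Qm x y := rfl

lemma conj_uQ (s : F) (Y : SL2 F) :
    Y * uQ s 1 0 = uQ s (Y.1 0 0) (Y.1 1 0) * Y := by
  obtain ⟨M, hM⟩ := Y
  have hdet : M 0 0 * M 1 1 - M 0 1 * M 1 0 = 1 := by
    rwa [det_fin_two] at hM
  apply Subtype.ext
  show M * (uQ s 1 0 : Matrix (Fin 2) (Fin 2) F) = (uQ s (M 0 0) (M 1 0) : Matrix (Fin 2) (Fin 2) F) * M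
  ext i j
  fin_cases i <;> fin_cases j <;>
    simp [uQ, Qm, Matrix.mul_apply, Fin.sum_univ_succ, Matrix.one_apply]
  all_goals
    first
      | ring1
      | linear_combination (s * M 0 0) * hdet
      | linear_combination (s * M 1 0) * hdet
      | linear_combination (-(s * M 0 0)) * hdet
      | linear_combination (-(s * M 1 0)) * hdet

lemma exists_col (x y : F) (h : ¬ (x = 0 ∧ y = 0)) :
    ∃ Y : SL2 F, Y.1 0 0 = x ∧ Y.1 1 0 = y := by
  by_cases hx : x = 0
  · have hy : y ≠ 0 := fun hy => h ⟨hx, hy⟩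
    exact ⟨⟨!![x, -y⁻¹; y, 0], by simp [det_fin_two, hx, inv_mul_cancel₀ hy]⟩, rfl, rfl⟩
  · exact ⟨⟨!![x, 0; y, x⁻¹], by simp [det_fin_two, mul_inv_cancel₀ hx]⟩, rfl, rfl⟩

lemma trace_uQ_mul (s t x y z w : F) :
    trace ((uQ s x y : Matrix (Fin 2) (Fin 2) F) * (uQ t z w : Matrix (Fin 2) (Fin 2) F))
      = 2 - s*t*(x*w - y*z)^2 := by
  simp [uQ, Qm, trace_fin_two, Matrix.mul_apply, Fin.sum_univ_succ, Matrix.one_apply]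
  ring

lemma Qform (X : Matrix (Fin 2) (Fin 2) F) (htr : trace X = 0) (hdet : det X = 0)
    (hX : X ≠ 0) : ∃ r e₀ e₁ : F, r ≠ 0 ∧ ¬(e₀ = 0 ∧ e₁ = 0) ∧ X = r • Qm e₀ e₁ := by
  rw [trace_fin_two] at htr
  rw [det_fin_two] at hdet
  by_cases hb : X 0 1 ≠ 0
  · refine ⟨X 0 1, 1, -(X 0 0)/(X 0 1), hb, by simp, ?_⟩
    have h11 : X 1 1 = -X 0 0 := by linear_combination htr
    have h10 : X 1 0 = -(X 0 0^2) / X 0 1 := by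
      field_simp
      linear_combination -hdet + X 0 0 * htr
    ext i j
    fin_cases i <;> fin_cases j <;> simp [Qm, h11, h10] <;> field_simp <;> ring
  · push_neg at hb
    have h2 : X 0 0 ^ 2 = 0 := by
      linear_combination X 0 0 * htr - hdet - X 1 0 * hb
    have h00 : X 0 0 = 0 := by exact pow_eq_zero_iff (by norm_num) |>.mp h2
    have h11 : X 1 1 = 0 := by linear_combination htr - h00
    by_cases hc : X 1 0 = 0
    · exfalso; apply hX
      ext i j
      fin_cases i <;> fin_cases j <;> simp [hb, hc, h00, h11]
    · refine ⟨-(X 1 0), 0, 1, neg_ne_zero.mpr hc, by simp, ?_⟩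
      ext i j
      fin_cases i <;> fin_cases j <;> simp [Qm, hb, h00, h11]

lemma commute_uQ (s t x y z w : F) (h : x*w - y*z = 0) :
    (uQ s x y) * (uQ t z w) = (uQ t z w) * (uQ s x y) := by
  apply Subtype.ext
  have h1 : Qm x y * Qm z w = 0 := by rw [Qm_mul_Qm, h, zero_smul]
  have h2 : Qm z w * Qm x y = 0 := by
    rw [Qm_mul_Qm, show z*y - w*x = 0 by linear_combination -h, zero_smul]
  show ((1 : Matrix (Fin 2) (Fin 2) F) + s • Qm x y) * (1 + t • Qm z w)
      = (1 + t • Qm z w) * (1 + s • Qm x y)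
  simp [mul_add, add_mul, smul_mul_assoc, mul_smul_comm, h1, h2, smul_smul]
  abel

lemma commute_neg_one_sub (s r x y : F) :
    ((1 : Matrix (Fin 2) (Fin 2) F) + s • Qm x y) * (-1 - r • Qm x y)
      = (-1 - r • Qm x y) * ((1 : Matrix (Fin 2) (Fin 2) F) + s • Qm x y) := by
  have h1 : Qm x y * Qm x y = 0 := by
    rw [Qm_mul_Qm, show x*y - y*x = 0 by ring, zero_smul]
  simp [mul_add, add_mul, mul_sub, sub_mul, smul_mul_assoc, mul_smul_comm, h1]
  abel

lemma mul_sq_zero (M : Matrix (Fin 2) (Fin 2) F) (hd : det M = 0) :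
    M * M = trace M • M := by
  rw [det_fin_two] at hd
  ext i j
  fin_cases i <;> fin_cases j <;>
    simp [Matrix.mul_apply, Fin.sum_univ_succ, trace_fin_two]
  all_goals first | ring1 | linear_combination hd | linear_combination -hd

lemma det_add_one (M : Matrix (Fin 2) (Fin 2) F) :
    det (M + 1) = det M + trace M + 1 := by
  simp [det_fin_two, trace_fin_two, Matrix.add_apply, Matrix.one_apply]
  ring

def Jm : SL2 F := ⟨-1, by simp [det_fin_two]⟩

lemma Jm_mem_center : (Jm : SL2 F) ∈ Subgroup.center (SL2 F) := by
  rw [Subgroup.mem_center_iff]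
  intro g
  apply Subtype.ext
  show (g : Matrix (Fin 2) (Fin 2) F) * (-1) = (-1) * (g : Matrix (Fin 2) (Fin 2) F)
  simp

lemma center_char (A : SL2 F) (hA : A ∈ Subgroup.center (SL2 F)) :
    (A : Matrix (Fin 2) (Fin 2) F) = 1 ∨ (A : Matrix (Fin 2) (Fin 2) F) = -1 := by
  have h1 := Subgroup.mem_center_iff.mp hA (uQ 1 1 0)
  have h2 := Subgroup.mem_center_iff.mp hA (uQ 1 0 1)
  have hm1 : (uQ 1 1 0 : SL2 F).1 * A.1 = A.1 * (uQ 1 1 0 : SL2 F).1 := by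
    rw [← Matrix.SpecialLinearGroup.coe_mul, ← Matrix.SpecialLinearGroup.coe_mul, h1]
  have hm2 : (uQ 1 0 1 : SL2 F).1 * A.1 = A.1 * (uQ 1 0 1 : SL2 F).1 := by
    rw [← Matrix.SpecialLinearGroup.coe_mul, ← Matrix.SpecialLinearGroup.coe_mul, h2]
  have e10 : A.1 1 0 = 0 := by
    have := congrFun (congrFun hm1 0) 0
    simp [uQ, Qm, Matrix.mul_apply, Fin.sum_univ_succ, Matrix.one_apply] at this
    linear_combination this
  have e01 : A.1 0 1 = 0 := by
    have := congrFun (congrFun hm2 0) 0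
    simp [uQ, Qm, Matrix.mul_apply, Fin.sum_univ_succ, Matrix.one_apply] at this
    linear_combination this
  have ediag : A.1 0 0 = A.1 1 1 := by
    have := congrFun (congrFun hm1 0) 1
    simp [uQ, Qm, Matrix.mul_apply, Fin.sum_univ_succ, Matrix.one_apply] at this
    linear_combination -this
  have hdet : A.1 0 0 * A.1 1 1 - A.1 0 1 * A.1 1 0 = 1 := by
    have := A.2; rwa [det_fin_two] at this
  rw [e01, e10, ← ediag] at hdet
  have hsq : A.1 0 0 * A.1 0 0 = 1 := by linear_combination hdet
  rcases mul_self_eq_one_iff.mp hsq with h | h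
  · left; ext i j
    fin_cases i <;> fin_cases j <;>
      simp [Matrix.one_apply, e01, e10, h, ← ediag]
  · right; ext i j
    fin_cases i <;> fin_cases j <;>
      simp [Matrix.one_apply, e01, e10, h, ← ediag]

section PSL
variable (F) in
abbrev PSL2 := SL2 F ⧸ Subgroup.center (SL2 F)

variable (F) in
def pi : SL2 F →* PSL2 F := QuotientGroup.mk' (Subgroup.center (SL2 F))

lemma mem_class_iff (s₀ : F) (a : PSL2 F) :
    IsConj (pi F (uQ s₀ 1 0)) a ↔
      ∃ x y : F, ¬(x = 0 ∧ y = 0) ∧ a = pi F (uQ s₀ x y) := by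
  constructor
  · intro h
    obtain ⟨z, hz⟩ := isConj_iff.mp h
    obtain ⟨Z, rfl⟩ := QuotientGroup.mk'_surjective (Subgroup.center (SL2 F)) z
    refine ⟨Z.1 0 0, Z.1 1 0, ?_, ?_⟩
    · rintro ⟨h1, h2⟩
      have := Z.2
      rw [det_fin_two, h1, h2] at this
      simp at this
    · have hc : Z * uQ s₀ 1 0 * Z⁻¹ = uQ s₀ (Z.1 0 0) (Z.1 1 0) := by
        rw [conj_uQ, mul_inv_cancel_right]
      rw [← hz, ← hc]
      simp [pi]
  · rintro ⟨x, y, hxy, rfl⟩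
    obtain ⟨Y, hY1, hY2⟩ := exists_col x y hxy
    have hc : IsConj (uQ s₀ 1 0) (uQ s₀ x y) := by
      rw [isConj_iff]
      exact ⟨Y, by rw [conj_uQ, hY1, hY2, mul_inv_cancel_right]⟩
    exact (pi F).map_isConj hc

lemma reach_of_commute {C : Set (PSL2 F)} (a b : ↥C)
    (h : Commute (a : PSL2 F) (b : PSL2 F)) : (killingGraph C).Reachable a b := by
  by_cases hab : a = b
  · rw [hab]
  · apply SimpleGraph.Adj.reachable
    refine (SimpleGraph.fromRel_adj _ _ _).mpr ⟨hab, Or.inl ⟨a, a.2, ?_⟩⟩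
    exact (Commute.refl _).mul_right h

variable (p : ℕ) [Fact p.Prime] [CharP F p]

lemma char_two_ne (hodd : Odd p) : (2 : F) ≠ 0 := by
  intro h
  have hdvd : p ∣ 2 := (CharP.cast_eq_zero_iff F p 2).mp (by exact_mod_cast h)
  have h2 := (Nat.prime_dvd_prime_iff_eq Fact.out Nat.prime_two).mp hdvd
  rw [h2] at hodd
  exact absurd hodd (by decide)

lemma main_conn (hodd : Odd p) (s₀ : F) (hs₀ : s₀ ≠ 0) :
    (killingGraph {h : PSL2 F | IsConj (pi F (uQ s₀ 1 0)) h}).Connected := by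
  have two_ne : (2 : F) ≠ 0 := char_two_ne (F := F) p hodd
  set C : Set (PSL2 F) := {h | IsConj (pi F (uQ s₀ 1 0)) h} with hC
  have hmem : ∀ x y : F, ¬(x = 0 ∧ y = 0) → pi F (uQ s₀ x y) ∈ C := fun x y h =>
    (mem_class_iff s₀ _).mpr ⟨x, y, h, rfl⟩
  rw [SimpleGraph.connected_iff]
  refine ⟨?_, ⟨⟨pi F (uQ s₀ 1 0), IsConj.refl _⟩⟩⟩
  rintro A B
  obtain ⟨x, y, hxy, ha⟩ := (mem_class_iff s₀ A.1).mp A.2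
  obtain ⟨z, w, hzw, hb⟩ := (mem_class_iff s₀ B.1).mp B.2
  by_cases hω : x*w - y*z = 0
  · apply reach_of_commute
    rw [ha, hb]
    exact Commute.map (commute_uQ s₀ s₀ x y z w hω) (pi F)
  · set μ : F := 2/(s₀*(x*w - y*z)) with hμdef
    have hμ : μ ≠ 0 := div_ne_zero two_ne (mul_ne_zero hs₀ hω)
    have hzw' : ¬(μ*z = 0 ∧ μ*w = 0) := by
      rintro ⟨h1, h2⟩
      exact hzw ⟨(mul_eq_zero.mp h1).resolve_left hμ, (mul_eq_zero.mp h2).resolve_left hμ⟩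
    set B' : ↥C := ⟨pi F (uQ s₀ (μ*z) (μ*w)), hmem _ _ hzw'⟩ with hB'
    have step2 : (killingGraph C).Reachable B' B := by
      apply reach_of_commute
      rw [hb]
      exact Commute.map (commute_uQ s₀ s₀ (μ*z) (μ*w) z w (by ring)) (pi F)
    refine SimpleGraph.Reachable.trans ?_ step2
    by_cases hAB' : A = B'
    · rw [hAB']
    · apply SimpleGraph.Adj.reachable
      refine (SimpleGraph.fromRel_adj _ _ _).mpr ⟨hAB', Or.inl ?_⟩
      obtain ⟨M, hM⟩ : ∃ M : SL2 F, M = uQ s₀ x y * uQ s₀ (μ*z) (μ*w) := ⟨_, rfl⟩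
      have hprod : (A : PSL2 F) * (B' : PSL2 F) = pi F M := by
        rw [ha, hM]
        exact (_root_.map_mul (pi F) _ _).symm
      have htrM : trace (M.1) = -2 := by
        rw [hM, Matrix.SpecialLinearGroup.coe_mul, trace_uQ_mul, hμdef]
        field_simp
        ring
      by_cases hXz : (M.1 : Matrix (Fin 2) (Fin 2) F) = -1
      · have hM1 : pi F M = 1 := by
          rw [show M = Jm from Subtype.ext hXz]
          exact (QuotientGroup.eq_one_iff _).mpr Jm_mem_center
        refine ⟨A.1, A.2, ?_⟩
        rw [hprod, hM1]
        exact Commute.one_right _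
      · set X : Matrix (Fin 2) (Fin 2) F := -(M.1 + 1) with hXdef
        have hXne : X ≠ 0 := by
          intro h
          rw [hXdef, neg_eq_zero] at h
          exact hXz (eq_neg_of_add_eq_zero_left h)
        have htrX : trace X = 0 := by
          rw [hXdef]
          simp [Matrix.trace_add, htrM]
        have hdetX : det X = 0 := by
          rw [hXdef, show -((M : Matrix (Fin 2) (Fin 2) F) + 1) = (-1 : F) • ((M : Matrix (Fin 2) (Fin 2) F) + 1) from (neg_one_smul _ _).symm, det_smul,
            det_add_one, htrM, M.2]
          norm_num
        obtain ⟨r, e₀, e₁, hr, he, hXQ⟩ := Qform X htrX hdetX hXne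
        have hMc : (M.1 : Matrix (Fin 2) (Fin 2) F) = -1 - r • Qm e₀ e₁ := by
          rw [← hXQ, hXdef]
          abel
        have hcomm : uQ s₀ e₀ e₁ * M = M * uQ s₀ e₀ e₁ := by
          apply Subtype.ext
          rw [Matrix.SpecialLinearGroup.coe_mul, Matrix.SpecialLinearGroup.coe_mul, hMc,
            uQ_coe]
          exact commute_neg_one_sub s₀ r e₀ e₁
        refine ⟨pi F (uQ s₀ e₀ e₁), hmem _ _ he, ?_⟩
        rw [hprod]
        exact Commute.map (hcomm : Commute (uQ s₀ e₀ e₁) M) (pi F)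

lemma pow_succ_eq (M : Matrix (Fin 2) (Fin 2) F) (hd : det M = 0) (n : ℕ) :
    M^(n+1) = (trace M)^n • M := by
  induction n with
  | zero => simp
  | succ n ih =>
    rw [pow_succ, ih, smul_mul_assoc, mul_sq_zero M hd, smul_smul, ← pow_succ]

lemma step_A (hodd : Odd p) (g₀ : PSL2 F) (hg₀ : orderOf g₀ = p) :
    ∃ r : F, r ≠ 0 ∧ IsConj (pi F (uQ r 1 0)) g₀ := by
  have pp : p.Prime := Fact.out
  obtain ⟨A, rfl⟩ := QuotientGroup.mk'_surjective (Subgroup.center (SL2 F)) g₀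
  have hg₀' : orderOf (pi F A) = p := hg₀
  have h1 : pi F (A ^ p) = 1 := by
    rw [map_pow]
    rw [← hg₀']
    exact pow_orderOf_eq_one _
  have hApc : A ^ p ∈ Subgroup.center (SL2 F) := (QuotientGroup.eq_one_iff _).mp h1
  obtain ⟨B, hBpi, hBp⟩ : ∃ B : SL2 F, pi F B = pi F A ∧ B ^ p = 1 := by
    rcases center_char _ hApc with hc | hc
    · exact ⟨A, rfl, Subtype.ext (by rw [Matrix.SpecialLinearGroup.coe_pow]; exact hc)⟩
    · have hJA : Commute Jm A := Subgroup.mem_center_iff.mp Jm_mem_center A |>.symm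
      have hApJ : A ^ p = Jm := Subtype.ext hc
      have hJsq : Jm * Jm = (1 : SL2 F) := Subtype.ext (by
        rw [Matrix.SpecialLinearGroup.coe_mul]
        show (-1 : Matrix (Fin 2) (Fin 2) F) * (-1) = 1
        simp)
      obtain ⟨k, hk⟩ := hodd
      have hJp : (Jm : SL2 F) ^ p = Jm := by
        rw [hk, pow_add, pow_mul, pow_one, pow_two, hJsq, one_pow, one_mul]
      refine ⟨Jm * A, ?_, ?_⟩
      · have hJ1 : pi F Jm = 1 := (QuotientGroup.eq_one_iff _).mpr Jm_mem_center
        rw [_root_.map_mul, hJ1, one_mul]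
      · rw [hJA.mul_pow, hJp, hApJ, hJsq]
  have hp2 := pp.two_le
  have hBne : B ≠ 1 := by
    intro h
    rw [h, _root_.map_one] at hBpi
    rw [← hBpi, orderOf_one] at hg₀'
    exact pp.ne_one hg₀'.symm
  set X : Matrix (Fin 2) (Fin 2) F := (B : Matrix (Fin 2) (Fin 2) F) - 1 with hXdef
  have hXne : X ≠ 0 := by
    rw [hXdef, sub_ne_zero]
    intro h
    exact hBne (Subtype.ext h)
  have hXp : X ^ p = 0 := by
    rw [hXdef, sub_pow_char_of_commute _ (Commute.one_right _), one_pow,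
      ← Matrix.SpecialLinearGroup.coe_pow, hBp]
    simp
  have hdetX : det X = 0 := by
    have h := congrArg det hXp
    rw [det_pow] at h
    simp at h
    exact h.1
  have htrX : trace X = 0 := by
    have h := hXp
    rw [show p = (p-1)+1 by omega, pow_succ_eq X hdetX] at h
    rcases smul_eq_zero.mp h with h' | h'
    · exact pow_eq_zero_iff (by omega : p - 1 ≠ 0) |>.mp h'
    · exact absurd h' hXne
  obtain ⟨r, e₀, e₁, hr, he, hXQ⟩ := Qform X htrX hdetX hXne
  have hBeq : B = uQ r e₀ e₁ := Subtype.ext (by rw [uQ_coe, ← hXQ, hXdef]; abel)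
  obtain ⟨Y, hY1, hY2⟩ := exists_col e₀ e₁ he
  have hsl : IsConj (uQ r 1 0) B := by
    rw [isConj_iff]
    exact ⟨Y, by rw [conj_uQ, mul_inv_cancel_right, hY1, hY2]; exact hBeq.symm⟩
  refine ⟨r, hr, ?_⟩
  have := (pi F).map_isConj hsl
  rwa [hBpi] at this
end PSL

end KillingAux

/-- In `PSL₂(F) = SL₂(F) ⧸ Z(SL₂(F))` over a finite field of odd characteristic
`p`, the Killing graph of a conjugacy class of elements of order `p` is connected,
i.e. the Killing form is irreducible. -/
theorem statement6 {F : Type*} [Field F] [Fintype F] (p : ℕ) [Fact p.Prime]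
    [CharP F p] (hodd : Odd p)
    (g₀ : Matrix.SpecialLinearGroup (Fin 2) F ⧸
      Subgroup.center (Matrix.SpecialLinearGroup (Fin 2) F))
    (hg₀ : orderOf g₀ = p) :
    (killingGraph {h : Matrix.SpecialLinearGroup (Fin 2) F ⧸
      Subgroup.center (Matrix.SpecialLinearGroup (Fin 2) F) | IsConj g₀ h}).Connected := by
  obtain ⟨r, hr, hconj⟩ := step_A p hodd g₀ hg₀
  have hset : {h : PSL2 F | IsConj g₀ h} = {h : PSL2 F | IsConj (pi F (uQ r 1 0)) h} :=
    Set.ext fun h => ⟨fun hh => hconj.trans hh, fun hh => hconj.symm.trans hh⟩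
  rw [hset]
  exact main_conn p hodd r hr
end

section
/- Let α ∈ F with α ≠ 0 and α + α^q = 0, and set x = I + αE₁₃, so that x ∈ SU₃(q). Then a matrix y = (y_{ij}) ∈ SU₃(q) satisfies xy = yx if and only if y₂₁ = y₃₁ = y₃₂ = 0 and y₁₁ = y₃₃; in that case y is upper triangular and y₂₂ = y₁₁^{-2}. -/
section SU3Def

variable (F : Type*) [Field F]

/-- Entrywise `q`-th power followed by transpose: the map `M ↦ M*`. -/
def matStar (q : ℕ) (M : Matrix (Fin 3) (Fin 3) F) : Matrix (Fin 3) (Fin 3) F :=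
  (M.map fun a => a ^ q).transpose

/-- The Gram matrix of the Hermitian form, with ones on the anti-diagonal. -/
def J3 : Matrix (Fin 3) (Fin 3) F := !![0, 0, 1; 0, 1, 0; 1, 0, 0]

variable (p k : ℕ) [Fact p.Prime] [CharP F p]

lemma matStar_eq_map (M : Matrix (Fin 3) (Fin 3) F) :
    matStar F (p ^ k) M = (M.map (iterateFrobenius F p k)).transpose := rfl

lemma matStar_mul (M N : Matrix (Fin 3) (Fin 3) F) :
    matStar F (p ^ k) (M * N) = matStar F (p ^ k) N * matStar F (p ^ k) M := by
  rw [matStar_eq_map, matStar_eq_map, matStar_eq_map, Matrix.map_mul, Matrix.transpose_mul]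

lemma matStar_one : matStar F (p ^ k) (1 : Matrix (Fin 3) (Fin 3) F) = 1 := by
  rw [matStar_eq_map, Matrix.map_one _ (map_zero _) (map_one _), Matrix.transpose_one]

/-- The special unitary group `SU₃(q)`, `q = p ^ k`, as a subgroup of `SL₃(F)`,
where `F` is a field of characteristic `p` (intended to have `q ^ 2` elements):
matrices `A` with `det A = 1` and `A* J A = J`. -/
def SU3 : Subgroup (Matrix.SpecialLinearGroup (Fin 3) F) where
  carrier := {A | matStar F (p ^ k) (↑A) * J3 F * (↑A) = J3 F}
  one_mem' := by
    simp only [Set.mem_setOf_eq, Matrix.SpecialLinearGroup.coe_one, matStar_one, one_mul, mul_one]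
  mul_mem' := by
    intro A B hA hB
    simp only [Set.mem_setOf_eq] at *
    rw [Matrix.SpecialLinearGroup.coe_mul, matStar_mul]
    calc matStar F (p ^ k) ↑B * matStar F (p ^ k) ↑A * J3 F * (↑A * ↑B)
        = matStar F (p ^ k) ↑B * (matStar F (p ^ k) ↑A * J3 F * ↑A) * ↑B := by
          simp only [mul_assoc]
      _ = matStar F (p ^ k) ↑B * J3 F * ↑B := by rw [hA]
      _ = J3 F := hB
  inv_mem' := by
    intro A hA
    simp only [Set.mem_setOf_eq] at *
    have hI : (↑A : Matrix (Fin 3) (Fin 3) F) * (↑(A⁻¹) : Matrix (Fin 3) (Fin 3) F) = 1 := by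
      rw [← Matrix.SpecialLinearGroup.coe_mul]
      simp
    have h1 : matStar F (p ^ k) ↑(A⁻¹) * matStar F (p ^ k) ↑A = 1 := by
      rw [← matStar_mul, hI, matStar_one]
    calc matStar F (p ^ k) ↑(A⁻¹) * J3 F * ↑(A⁻¹)
        = matStar F (p ^ k) ↑(A⁻¹) * (matStar F (p ^ k) ↑A * J3 F * ↑A) * ↑(A⁻¹) := by rw [hA]
      _ = matStar F (p ^ k) ↑(A⁻¹) * matStar F (p ^ k) ↑A * J3 F * (↑A * ↑(A⁻¹)) := by
          simp only [mul_assoc]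
      _ = J3 F := by rw [h1, hI, one_mul, mul_one]

/-- The underlying 3×3 matrix of an element of `SU3 F p k`. -/
def su3mat (A : SU3 F p k) : Matrix (Fin 3) (Fin 3) F :=
  ((A : Matrix.SpecialLinearGroup (Fin 3) F) : Matrix (Fin 3) (Fin 3) F)

end SU3Def

/-- For `α ≠ 0` with `α + α^q = 0`, the matrix `x = I + α·E₁₃` lies in `SU₃(q)`,
and `y ∈ SU₃(q)` commutes with `x` iff `y₂₁ = y₃₁ = y₃₂ = 0` and `y₁₁ = y₃₃`;
in that case `y` is upper triangular with `y₂₂ = y₁₁⁻²`. -/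
theorem statement7 {F : Type*} [Field F] [Fintype F] (p k : ℕ) [Fact p.Prime]
    [CharP F p] (hk : k ≠ 0) (hF : Fintype.card F = (p ^ k) ^ 2)
    (α : F) (hα0 : α ≠ 0) (hα : α + α ^ p ^ k = 0) :
    ((1 + Matrix.single 0 2 α : Matrix (Fin 3) (Fin 3) F).det = 1 ∧
      matStar F (p ^ k) (1 + Matrix.single 0 2 α) * J3 F *
        (1 + Matrix.single 0 2 α) = J3 F) ∧
    (∀ y : Matrix (Fin 3) (Fin 3) F, y.det = 1 →
      matStar F (p ^ k) y * J3 F * y = J3 F →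
      (((1 + Matrix.single 0 2 α) * y = y * (1 + Matrix.single 0 2 α)) ↔
        (y 1 0 = 0 ∧ y 2 0 = 0 ∧ y 2 1 = 0 ∧ y 0 0 = y 2 2)) ∧
      ((1 + Matrix.single 0 2 α) * y = y * (1 + Matrix.single 0 2 α) →
        y 1 1 = (y 0 0)⁻¹ ^ 2)) := by
  have hq0 : p ^ k ≠ 0 := pow_ne_zero _ (Fact.out : p.Prime).ne_zero
  have hq : α ^ p ^ k = -α := by linear_combination hα
  have hone : (1 : F) ^ p ^ k = 1 := one_pow _
  have hzero : (0 : F) ^ p ^ k = 0 := zero_pow hq0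
  refine ⟨⟨?_, ?_⟩, ?_⟩
  · have h1 : (1 + Matrix.single 0 2 α : Matrix (Fin 3) (Fin 3) F) =
        !![1,0,α;0,1,0;0,0,1] := by
      ext i j
      fin_cases i <;> fin_cases j <;>
        simp [Matrix.single, Matrix.one_apply, Matrix.vecHead, Matrix.vecTail]
    rw [h1, Matrix.det_fin_three]
    simp [Matrix.vecHead, Matrix.vecTail]
  · ext i j
    fin_cases i <;> fin_cases j <;>
      simp [matStar, J3, Matrix.mul_apply, Fin.sum_univ_three,
        Matrix.single, Matrix.one_apply, Matrix.vecHead, Matrix.vecTail, hq, hone, hzero] <;> ring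
  · intro y hdet hunit
    have key : ((1 + Matrix.single 0 2 α) * y =
        y * (1 + Matrix.single 0 2 α)) ↔
        (y 1 0 = 0 ∧ y 2 0 = 0 ∧ y 2 1 = 0 ∧ y 0 0 = y 2 2) := by
      constructor
      · intro h
        rw [← Matrix.ext_iff] at h
        have e10 := h 1 2
        have e20 := h 0 0
        have e21 := h 0 1
        have e22 := h 0 2
        simp [Matrix.mul_apply, Fin.sum_univ_three, Matrix.single,
          Matrix.one_apply] at e10 e20 e21 e22
        refine ⟨e10.resolve_right hα0, e20.resolve_left hα0, e21.resolve_left hα0, ?_⟩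
        have h' : α * y 2 2 = α * y 0 0 := by linear_combination e22
        exact (mul_left_cancel₀ hα0 h').symm
      · rintro ⟨h1, h2, h3, h4⟩
        ext i j
        fin_cases i <;> fin_cases j <;>
          simp [Matrix.mul_apply, Fin.sum_univ_three, Matrix.single,
            Matrix.one_apply, h1, h2, h3, h4] <;> ring
    refine ⟨key, ?_⟩
    intro h
    obtain ⟨h1, h2, h3, h4⟩ := key.mp h
    rw [Matrix.det_fin_three] at hdet
    rw [h1, h2, h3, ← h4] at hdet
    have h00 : y 0 0 ≠ 0 := by
      intro h0
      rw [h0] at hdet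
      simp at hdet
    field_simp
    linear_combination hdet
end

section
/- Suppose q ≡ -1 (mod 3). Let x, y ∈ SU₃(q) be upper unitriangular matrices (diagonal entries equal to 1 and entries below the diagonal equal to 0) whose (1,2)-entries x₁₂ and y₁₂ are both nonzero. Then x and y are conjugate in SU₃(q) if and only if x₁₂ = c³·y₁₂ for some nonzero c ∈ F, i.e., if and only if x₁₂/y₁₂ is a cube in the multiplicative group F^×. -/
open Polynomial Finset in
lemma su3aux_as_lemma {F : Type*} [Field F] [Fintype F] {q : ℕ} (hq2 : 2 ≤ q)
    (hcard : Fintype.card F = q ^ 2)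
    (hadd : ∀ a b : F, (a + b) ^ q = a ^ q + b ^ q)
    (ε : F) (hε2 : ε * ε = 1) (hεq : ε ^ q = ε)
    (w : F) (hw : w ^ q = -(ε * w)) : ∃ z : F, z ^ q - ε * z = w := by
  classical
  have hq0 : 0 < q := by omega
  have hdeg : ∀ w₀ : F, ((X : F[X]) ^ q - (C ε * X + C w₀)).natDegree = q := by
    intro w₀
    rw [natDegree_sub_eq_left_of_natDegree_lt]
    · exact natDegree_X_pow q
    · rw [natDegree_X_pow]
      calc (C ε * X + C w₀).natDegree ≤ max (C ε * X).natDegree (C w₀).natDegree :=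
            natDegree_add_le _ _
        _ ≤ 1 := by
            simp only [max_le_iff, natDegree_C]
            exact ⟨(natDegree_C_mul_le _ _).trans (by simp), by omega⟩
        _ < q := by omega
  have hne : ∀ w₀ : F, ((X : F[X]) ^ q - (C ε * X + C w₀)) ≠ 0 := by
    intro w₀ h
    have := hdeg w₀
    rw [h, natDegree_zero] at this
    omega
  have hroot : ∀ w₀ z : F, z ^ q - ε * z = w₀ →
      ((X : F[X]) ^ q - (C ε * X + C w₀)).IsRoot z := by
    intro w₀ z h
    simp only [IsRoot, eval_sub, eval_pow, eval_X, eval_add, eval_mul, eval_C]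
    linear_combination h
  have hfiber : ∀ w₀ : F, #{z : F | (fun z : F => z ^ q - ε * z) z = w₀} ≤ q := by
    intro w₀
    have h := card_le_degree_of_subset_roots (p := (X : F[X]) ^ q - (C ε * X + C w₀))
      (Z := {z : F | (fun z : F => z ^ q - ε * z) z = w₀}) ?_
    · rwa [hdeg] at h
    · intro z hz
      rw [Finset.mem_val, Finset.mem_filter] at hz
      exact mem_roots'.2 ⟨hne w₀, hroot w₀ z hz.2⟩
  set A := Finset.image (fun z : F => z ^ q - ε * z) univ with hA
  have hAcard : q ≤ A.card := by
    have h1 : (univ : Finset F).card = ∑ w₀ ∈ A, #{z : F | (fun z : F => z ^ q - ε * z) z = w₀} :=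
      card_eq_sum_card_image _ _
    have h2 : (univ : Finset F).card ≤ A.card * q := by
      rw [h1]
      calc ∑ w₀ ∈ A, #{z : F | (fun z : F => z ^ q - ε * z) z = w₀}
          ≤ ∑ _w₀ ∈ A, q := Finset.sum_le_sum fun i _ => hfiber i
        _ = A.card * q := by rw [Finset.sum_const, smul_eq_mul]
    rw [Finset.card_univ, hcard, pow_two] at h2
    exact Nat.le_of_mul_le_mul_right h2 hq0
  set B : Finset F := {w₀ : F | w₀ ^ q + ε * w₀ = 0} with hB
  have hlt2 : (C ε * X : F[X]).natDegree < ((X : F[X]) ^ q).natDegree := by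
    rw [natDegree_X_pow]
    exact lt_of_le_of_lt ((natDegree_C_mul_le _ _).trans natDegree_X.le) (by omega)
  have hdeg2 : ((X : F[X]) ^ q + C ε * X).natDegree = q := by
    rw [natDegree_add_eq_left_of_natDegree_lt hlt2, natDegree_X_pow]
  have hpne : ((X : F[X]) ^ q + C ε * X) ≠ 0 := by
    intro h0
    rw [h0, natDegree_zero] at hdeg2; omega
  have hBcard : B.card ≤ q := by
    have h := card_le_degree_of_subset_roots (p := (X : F[X]) ^ q + C ε * X) (Z := B) ?_
    · rwa [hdeg2] at h
    · intro z hz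
      rw [Finset.mem_val, hB, Finset.mem_filter] at hz
      refine mem_roots'.2 ⟨hpne, ?_⟩
      simp only [IsRoot, eval_add, eval_pow, eval_X, eval_mul, eval_C]
      exact hz.2
  have hAB : A ⊆ B := by
    intro w₀ hw₀
    rw [hA, Finset.mem_image] at hw₀
    obtain ⟨z, _, rfl⟩ := hw₀
    rw [hB, Finset.mem_filter]
    refine ⟨Finset.mem_univ _, ?_⟩
    have hFq : (z ^ q) ^ q = z := by
      rw [← pow_mul, ← pow_two, ← hcard]
      exact FiniteField.pow_card z
    have hsub : (z ^ q - ε * z) ^ q = (z ^ q) ^ q - (ε * z) ^ q := by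
      have := hadd (z ^ q - ε * z) (ε * z)
      rw [sub_add_cancel] at this
      linear_combination -this
    rw [hsub, hFq, mul_pow, hεq]
    linear_combination (-z) * hε2
  have hBA : B = A := (Finset.eq_of_subset_of_card_le hAB (hBcard.trans hAcard)).symm
  have hwB : w ∈ B := by
    rw [hB, Finset.mem_filter]
    exact ⟨Finset.mem_univ _, by rw [hw]; ring⟩
  rw [hBA, hA, Finset.mem_image] at hwB
  obtain ⟨z, _, hz⟩ := hwB
  exact ⟨z, hz⟩

/-- Construction: an upper triangular matrix satisfying the unitarity equations lies in SU3. -/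
lemma su3aux_tri_mem {F : Type*} [Field F] (p k : ℕ) [Fact p.Prime] [CharP F p]
    (t e f x01 x02 x12 : F)
    (h1 : t ^ (p^k) * f = 1) (h2 : e ^ (p^k) * e = 1) (h3 : f ^ (p^k) * t = 1)
    (h4 : x01 ^ (p^k) * f + e ^ (p^k) * x12 = 0)
    (h5 : x12 ^ (p^k) * e + f ^ (p^k) * x01 = 0)
    (h6 : x02 ^ (p^k) * f + x12 ^ (p^k) * x12 + f ^ (p^k) * x02 = 0)
    (hdet : t * e * f = 1) :
    ∃ g : SU3 F p k, su3mat F p k g = !![t, x01, x02; 0, e, x12; 0, 0, f] := by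
  have hq0 : p ^ k ≠ 0 := pow_ne_zero _ (Nat.Prime.ne_zero Fact.out)
  refine ⟨⟨⟨!![t, x01, x02; 0, e, x12; 0, 0, f], ?_⟩, ?_⟩, rfl⟩
  · rw [Matrix.det_fin_three]
    simp [Matrix.vecHead, Matrix.vecTail]
    linear_combination hdet
  · show matStar F (p^k) _ * J3 F * _ = J3 F
    ext i j
    fin_cases i <;> fin_cases j <;>
      simp [Matrix.mul_apply, Fin.sum_univ_three, matStar, J3, zero_pow hq0,
        Matrix.vecHead, Matrix.vecTail] <;>
      first
        | rfl
        | linear_combination h1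
        | linear_combination h2
        | linear_combination h3
        | linear_combination h4
        | linear_combination h5
        | linear_combination h6

/-- Extraction: the unitarity relations of an upper unitriangular element of SU3. -/
lemma su3aux_tri_rel {F : Type*} [Field F] (p k : ℕ) [Fact p.Prime] [CharP F p]
    (x : SU3 F p k)
    (h10 : su3mat F p k x 1 0 = 0) (h20 : su3mat F p k x 2 0 = 0) (h21 : su3mat F p k x 2 1 = 0)
    (h00 : su3mat F p k x 0 0 = 1) (h11 : su3mat F p k x 1 1 = 1) (h22 : su3mat F p k x 2 2 = 1) :
    (su3mat F p k x 0 1) ^ (p^k) + su3mat F p k x 1 2 = 0 ∧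
    su3mat F p k x 0 1 + (su3mat F p k x 1 2) ^ (p^k) = 0 ∧
    su3mat F p k x 0 2 + (su3mat F p k x 1 2) ^ (p^k) * su3mat F p k x 1 2
      + (su3mat F p k x 0 2) ^ (p^k) = 0 := by
  have hq0 : p ^ k ≠ 0 := pow_ne_zero _ (Nat.Prime.ne_zero Fact.out)
  have hm : matStar F (p ^ k) (su3mat F p k x) * J3 F * (su3mat F p k x) = J3 F := x.2
  have h1 := congrFun (congrFun hm 1) 2
  have h2 := congrFun (congrFun hm 2) 1
  have h3 := congrFun (congrFun hm 2) 2
  simp [Matrix.mul_apply, Fin.sum_univ_three, matStar, J3, h10, h20, h21, h00, h11, h22,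
    zero_pow hq0, Matrix.vecHead, Matrix.vecTail] at h1 h2 h3
  refine ⟨by linear_combination h1, by linear_combination h2, by linear_combination h3⟩

/-- Suppose `q ≡ -1 (mod 3)`. Two upper unitriangular elements `x, y` of `SU₃(q)`
with nonzero `(1,2)`-entries are conjugate in `SU₃(q)` iff `x₁₂ = c³ · y₁₂` for
some nonzero `c ∈ F`. -/
theorem statement12 {F : Type*} [Field F] [Fintype F] (p k : ℕ) [Fact p.Prime]
    [CharP F p] (hk : k ≠ 0) (hF : Fintype.card F = (p ^ k) ^ 2)
    (hq : p ^ k % 3 = 2)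
    (x y : SU3 F p k)
    (hxlow : su3mat F p k x 1 0 = 0 ∧ su3mat F p k x 2 0 = 0 ∧ su3mat F p k x 2 1 = 0)
    (hxdiag : su3mat F p k x 0 0 = 1 ∧ su3mat F p k x 1 1 = 1 ∧ su3mat F p k x 2 2 = 1)
    (hx12 : su3mat F p k x 0 1 ≠ 0)
    (hylow : su3mat F p k y 1 0 = 0 ∧ su3mat F p k y 2 0 = 0 ∧ su3mat F p k y 2 1 = 0)
    (hydiag : su3mat F p k y 0 0 = 1 ∧ su3mat F p k y 1 1 = 1 ∧ su3mat F p k y 2 2 = 1)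
    (hy12 : su3mat F p k y 0 1 ≠ 0) :
    IsConj x y ↔ ∃ c : F, c ≠ 0 ∧ su3mat F p k x 0 1 = c ^ 3 * su3mat F p k y 0 1 := by
  classical
  set q := p ^ k with hqdef
  have hq0 : q ≠ 0 := pow_ne_zero _ (Nat.Prime.ne_zero Fact.out)
  have hq2 : 2 ≤ q := by omega
  have hqq : ∀ z : F, (z ^ q) ^ q = z := fun z => by
    rw [← pow_mul, ← sq, ← hF]; exact FiniteField.pow_card z
  have hadd : ∀ a b : F, (a + b) ^ q = a ^ q + b ^ q := fun a b => by exact add_pow_char_pow a b p k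
  have hsubq : ∀ a b : F, (a - b) ^ q = a ^ q - b ^ q := by
    intro a b
    have := hadd (a - b) b
    rw [sub_add_cancel] at this
    linear_combination -this
  have hneg : (-1 : F) ^ q = -1 := by
    rcases Nat.Prime.eq_two_or_odd' (Fact.out : p.Prime) with h2 | hodd
    · haveI : CharP F 2 := by rw [← h2]; infer_instance
      have hn1 : (-1 : F) = 1 := CharTwo.neg_eq 1
      rw [hn1, one_pow]
    · exact Odd.neg_one_pow (hodd.pow)
  -- entries of x and y
  obtain ⟨hEx1, hEx2, hEx3⟩ := su3aux_tri_rel p k x hxlow.1 hxlow.2.1 hxlow.2.2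
    hxdiag.1 hxdiag.2.1 hxdiag.2.2
  obtain ⟨hEy1, hEy2, hEy3⟩ := su3aux_tri_rel p k y hylow.1 hylow.2.1 hylow.2.2
    hydiag.1 hydiag.2.1 hydiag.2.2
  set a := su3mat F p k x 0 1 with hadef
  set b := su3mat F p k x 0 2 with hbdef
  set cx := su3mat F p k x 1 2 with hcxdef
  set a' := su3mat F p k y 0 1 with ha'def
  set b' := su3mat F p k y 0 2 with hb'def
  set cy := su3mat F p k y 1 2 with hcydef
  have hcx0 : cx ≠ 0 := by
    intro h0
    apply hx12
    have : cx ^ q = 0 := by rw [h0]; exact zero_pow hq0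
    linear_combination hEx2 - this
  constructor
  · -- forward direction
    intro h
    rw [isConj_iff] at h
    obtain ⟨g, hg⟩ := h
    have hgx : g * x = y * g := mul_inv_eq_iff_eq_mul.mp hg
    have hM : su3mat F p k g * su3mat F p k x = su3mat F p k y * su3mat F p k g :=
      congrArg (su3mat F p k) hgx
    have hE : ∀ i j, (su3mat F p k g * su3mat F p k x) i j
        = (su3mat F p k y * su3mat F p k g) i j := fun i j => by rw [hM]
    have e21 := hE 2 1
    have e22 := hE 2 2
    have e11 := hE 1 1
    have e01 := hE 0 1
    simp only [Matrix.mul_apply, Fin.sum_univ_three, hxlow.1, hxlow.2.1, hxlow.2.2,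
      hxdiag.1, hxdiag.2.1, hxdiag.2.2, hylow.1, hylow.2.1, hylow.2.2,
      hydiag.1, hydiag.2.1, hydiag.2.2, ← hadef, ← hbdef, ← hcxdef, ← ha'def, ← hb'def,
      ← hcydef, mul_zero, zero_mul, mul_one, one_mul, add_zero, zero_add] at e21 e22 e11 e01
    -- e21 : g20 * a + g21 = g21  etc.
    have hG20 : su3mat F p k g 2 0 = 0 := by
      have : su3mat F p k g 2 0 * a = 0 := by linear_combination e21
      exact (mul_eq_zero.mp this).resolve_right hx12
    have hG21 : su3mat F p k g 2 1 = 0 := by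
      have : su3mat F p k g 2 1 * cx = 0 := by linear_combination e22 - b * hG20
      exact (mul_eq_zero.mp this).resolve_right hcx0
    have hG10 : su3mat F p k g 1 0 = 0 := by
      have : su3mat F p k g 1 0 * a = 0 := by linear_combination e11 + cy * hG21
      exact (mul_eq_zero.mp this).resolve_right hx12
    have e01' : su3mat F p k g 0 0 * a = a' * su3mat F p k g 1 1 := by
      linear_combination e01 + b' * hG21
    -- unitarity of g at (0,2)
    have hgmem : matStar F q (su3mat F p k g) * J3 F * (su3mat F p k g) = J3 F := g.2
    have u02 := congrFun (congrFun hgmem 0) 2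
    simp [Matrix.mul_apply, Fin.sum_univ_three, matStar, J3, hG10, hG20, zero_pow hq0,
      Matrix.vecHead, Matrix.vecTail] at u02
    -- u02 : g00 ^ q * g22 = 1
    have hdetg : (su3mat F p k g).det = 1 := g.1.2
    rw [Matrix.det_fin_three] at hdetg
    rw [hG10, hG20, hG21] at hdetg
    set t := su3mat F p k g 0 0 with htdef
    set G11 := su3mat F p k g 1 1 with hG11def
    set G22 := su3mat F p k g 2 2 with hG22def
    have hdetg' : t * (G11 * G22) = 1 := by linear_combination hdetg
    have ht0 : t ≠ 0 := by
      intro h0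
      rw [h0] at u02
      simp [zero_pow hq0] at u02
    have hG220 : G22 ≠ 0 := by
      intro h0
      rw [h0] at hdetg'
      simp at hdetg'
    have key2 : a * t ^ 2 * (G22 * t) = a' * t ^ q * (G22 * t) := by
      linear_combination (t^2*G22) * e01' + (a'*t) * hdetg' - (a'*t) * u02
    have key : a * t ^ 2 = a' * t ^ q := mul_right_cancel₀ (mul_ne_zero hG220 ht0) key2
    have h3d : 3 ∣ q - 2 := by omega
    obtain ⟨m, hm⟩ := h3d
    refine ⟨t ^ m, pow_ne_zero _ ht0, ?_⟩
    have hqm : q = 3 * m + 2 := by omega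
    have : a * t ^ 2 = (t ^ m) ^ 3 * a' * t ^ 2 := by
      rw [key, hqm, ← pow_mul]
      ring
    exact mul_right_cancel₀ (pow_ne_zero 2 ht0) this
  · -- backward direction
    rintro ⟨c, hc0, hc⟩
    have hcpow : c ^ (q * q - 1) = 1 := by
      have h := FiniteField.pow_card_sub_one_eq_one c hc0
      rw [hF] at h
      have : q ^ 2 - 1 = q * q - 1 := by rw [pow_two]
      rwa [this] at h
    set t : F := (c ^ (q + 2))⁻¹ with htdef
    have ht0 : t ≠ 0 := inv_ne_zero (pow_ne_zero _ hc0)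
    have htq0 : t ^ q ≠ 0 := pow_ne_zero _ ht0
    have hkey : t ^ q = c ^ 3 * t ^ 2 := by
      have h1 : t ^ q * c ^ ((q+2)*q) = 1 := by
        rw [htdef, inv_pow, ← pow_mul, inv_mul_cancel₀ (pow_ne_zero _ hc0)]
      have h2 : t ^ 2 * c ^ ((q+2)*2) = 1 := by
        rw [htdef, inv_pow, ← pow_mul, inv_mul_cancel₀ (pow_ne_zero _ hc0)]
      have h3 : c ^ 3 * c ^ ((q+2)*q) = c ^ ((q+2)*2) * c ^ (q*q-1) := by
        rw [← pow_add, ← pow_add]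
        congr 1
        have e1 : (q+2)*q = q*q + 2*q := by ring
        have e2 : (q+2)*2 = 2*q + 4 := by ring
        have e3 : 1 ≤ q * q := Nat.one_le_iff_ne_zero.mpr (Nat.mul_ne_zero hq0 hq0)
        rw [e1, e2]
        omega
      have h4 : c ^ 3 * t ^ 2 = t ^ q := by
        calc c ^ 3 * t ^ 2 = c ^ 3 * t ^ 2 * (t ^ q * c ^ ((q+2)*q)) := by rw [h1, mul_one]
          _ = t ^ q * (t ^ 2 * (c ^ 3 * c ^ ((q+2)*q))) := by ring
          _ = t ^ q * (t ^ 2 * (c ^ ((q+2)*2) * c ^ (q*q-1))) := by rw [h3]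
          _ = t ^ q * ((t ^ 2 * c ^ ((q+2)*2)) * c ^ (q*q-1)) := by ring
          _ = t ^ q := by rw [h2, hcpow, one_mul, mul_one]
      exact h4.symm
    set e : F := c ^ 3 * t with hedef
    set f : F := (t ^ q)⁻¹ with hfdef
    have htqq : (t ^ q) ^ q = t := hqq t
    have hd1 : t ^ q * f = 1 := mul_inv_cancel₀ htq0
    have hd3 : f ^ q * t = 1 := by
      rw [hfdef, inv_pow, htqq]
      exact inv_mul_cancel₀ ht0
    have hthree : c ^ 3 * (c ^ q) ^ 3 * (t * t ^ q) = 1 := by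
      have h1 : t * t ^ q = c ^ 3 * t ^ 3 := by rw [hkey]; ring
      have h2 : t ^ 3 * c ^ ((q+2)*3) = 1 := by
        rw [htdef, inv_pow, ← pow_mul, inv_mul_cancel₀ (pow_ne_zero _ hc0)]
      calc c ^ 3 * (c ^ q) ^ 3 * (t * t ^ q) = c ^ 3 * (c ^ q) ^ 3 * (c ^ 3 * t ^ 3) := by
            rw [h1]
        _ = t ^ 3 * (c ^ 3 * ((c ^ q) ^ 3 * c ^ 3)) := by ring
        _ = t ^ 3 * c ^ ((q+2)*3) := by
            rw [← pow_mul, ← pow_add, ← pow_add]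
            congr 1
            ring
        _ = 1 := h2
    clear_value t
    have hd2 : e ^ q * e = 1 := by
      rw [hedef, mul_pow, ← pow_mul, mul_comm 3 q, pow_mul]
      linear_combination hthree
    have hdet : t * e * f = 1 := by
      rw [hedef, hfdef, hkey]
      field_simp
    have ha'e : t * a = a' * e := by
      rw [hedef, hc]; ring
    have hcq3 : a ^ q = (c ^ q) ^ 3 * a' ^ q := by
      rw [hc, mul_pow, ← pow_mul, mul_comm 3 q, pow_mul]
    have hbar2 : cx = -(a ^ q) := by linear_combination hEx1
    have hbar : cy = -(a' ^ q) := by linear_combination hEy1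
    have h12' : (c ^ 3 * t) * cx * t ^ q = cy := by
      rw [hbar, hbar2, hcq3]
      linear_combination -(a'^q) * hthree
    have h12 : e * cx = cy * f := by
      rw [hedef, hfdef, eq_comm, mul_inv_eq_iff_eq_mul₀ htq0]
      linear_combination -h12'
    -- choose r
    have haq0 : a ^ q ≠ 0 := pow_ne_zero _ hx12
    have haaq : a * a ^ q ≠ 0 := mul_ne_zero hx12 haq0
    have httq0 : t * t ^ q ≠ 0 := mul_ne_zero ht0 htq0
    set δ : F := b' * (t * t ^ q)⁻¹ - b with hδdef
    have hδq : δ ^ q = b' ^ q * (t * t ^ q)⁻¹ - b ^ q := by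
      rw [hδdef, hsubq, mul_pow, inv_pow, mul_pow, hqq, mul_comm (t ^ q) t]
    have hprodc : cx ^ q * cx * (t * t ^ q) = cy ^ q * cy := by
      have h1 : cx ^ q = -a := by linear_combination hEx2
      have h2 : cy ^ q = -a' := by linear_combination hEy2
      rw [h1, h2, hbar2, hbar, hcq3, hc]
      linear_combination (a' ^ q * a') * hthree
    have hδ0 : δ + δ ^ q = 0 := by
      rw [hδdef, hδq]
      field_simp [httq0]
      linear_combination hEy3 + hprodc - (t * t^q) * hEx3
    set w : F := δ * (a * a ^ q)⁻¹ with hwdef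
    have hwq : w ^ q = δ ^ q * (a * a ^ q)⁻¹ := by
      rw [hwdef, mul_pow, inv_pow, mul_pow, hqq, mul_comm (a ^ q) a]
    have hdneg : δ ^ q = -δ := by linear_combination hδ0
    have hw : w ^ q = -((1:F) * w) := by
      rw [hwq, hdneg, hwdef]
      ring
    obtain ⟨z, hz⟩ := su3aux_as_lemma hq2 hF hadd 1 (by ring) (one_pow q) w hw
    set r : F := a * z with hrdef
    set cr : F := -(r ^ q) with hcrdef
    have hu1 : r ^ q + cr = 0 := by rw [hcrdef]; ring
    have hcrq : cr ^ q = -r := by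
      rw [hcrdef, ← neg_one_mul, mul_pow, hneg, hqq, neg_one_mul]
    have hu2 : r + cr ^ q = 0 := by rw [hcrq]; ring
    set e0 : F := -(r * r ^ q) with he0def
    have he0 : e0 ^ q = -((-1:F) * e0) := by
      rw [he0def, ← neg_one_mul, mul_pow, hneg, mul_pow, hqq]
      ring
    obtain ⟨s, hs⟩ := su3aux_as_lemma hq2 hF hadd (-1) (by ring) hneg e0 he0
    have hu3 : s + cr ^ q * cr + s ^ q = 0 := by
      rw [hcrq, hcrdef]
      linear_combination hs
    have haw : a * a ^ q * w = δ := by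
      rw [hwdef, mul_comm δ, ← mul_assoc, mul_inv_cancel₀ haaq, one_mul]
    have hzr : r * cx - a * cr = δ := by
      linear_combination a * z * hbar2 + (a * a ^ q) * hz + haw
    have hzr' : (r * cx - a * cr) * (t * t ^ q) = b' - b * (t * t ^ q) := by
      rw [hzr, hδdef]
      field_simp
    have h02 : t * b + t * r * cx = a' * (e * cr) + b' * f := by
      rw [hfdef]
      have h1 : a' * (e * cr) = t * a * cr := by rw [← mul_assoc, ← ha'e]
      rw [h1]
      field_simp [htq0]
      linear_combination hzr'
    have hh4 : (t*r) ^ q * f + e ^ q * (e * cr) = 0 := by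
      rw [mul_pow]
      linear_combination (r^q) * hd1 + cr * hd2 + hu1
    have hh5 : (e*cr) ^ q * e + f ^ q * (t*r) = 0 := by
      rw [mul_pow]
      linear_combination (cr^q) * hd2 + r * hd3 + hu2
    have hh6 : (t*s) ^ q * f + (e*cr) ^ q * (e*cr) + f ^ q * (t*s) = 0 := by
      rw [mul_pow, mul_pow]
      linear_combination (s^q) * hd1 + (cr^q*cr) * hd2 + s * hd3 + hu3
    obtain ⟨g, hgmat⟩ := su3aux_tri_mem p k t e f (t*r) (t*s) (e*cr) hd1 hd2 hd3 hh4 hh5 hh6 hdet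
    have hxmat : su3mat F p k x = !![1, a, b; 0, 1, cx; 0, 0, 1] := by
      ext i j
      fin_cases i <;> fin_cases j <;>
        simp [hxlow.1, hxlow.2.1, hxlow.2.2, hxdiag.1, hxdiag.2.1, hxdiag.2.2,
          Matrix.vecHead, Matrix.vecTail, hadef, hbdef, hcxdef]
    have hymat : su3mat F p k y = !![1, a', b'; 0, 1, cy; 0, 0, 1] := by
      ext i j
      fin_cases i <;> fin_cases j <;>
        simp [hylow.1, hylow.2.1, hylow.2.2, hydiag.1, hydiag.2.1, hydiag.2.2,
          Matrix.vecHead, Matrix.vecTail, ha'def, hb'def, hcydef]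
    have hprodmat : !![t, t*r, t*s; 0, e, e*cr; 0, 0, f] * !![1, a, b; 0, 1, cx; 0, 0, 1]
        = !![1, a', b'; 0, 1, cy; 0, 0, 1] * !![t, t*r, t*s; 0, e, e*cr; 0, 0, f] := by
      ext i j
      fin_cases i <;> fin_cases j <;>
        simp [Matrix.mul_apply, Fin.sum_univ_three, Matrix.vecHead, Matrix.vecTail] <;>
        first
          | rfl
          | linear_combination ha'e
          | linear_combination -ha'e
          | linear_combination h02
          | linear_combination -h02
          | linear_combination h12
          | linear_combination -h12
    rw [isConj_iff]
    refine ⟨g, ?_⟩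
    rw [mul_inv_eq_iff_eq_mul]
    have hmm : su3mat F p k (g * x) = su3mat F p k (y * g) := by
      show su3mat F p k g * su3mat F p k x = su3mat F p k y * su3mat F p k g
      rw [hgmat, hxmat, hymat]
      exact hprodmat
    exact Subtype.ext (Subtype.ext hmm)
end
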